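/- arXiv:1910.14384 — 2 statements merged into one kernel-verified Lean document; each statement's English description precedes it below -/
import Mathlib

section
/- Soundness and completeness of the bimonoid-with-boxes axioms for isomorphism: for any terms s, t over {1, atoms, ·, ∥, [−]}, the interpretations of s and t are isomorphic posets with boxes if and only if s = t is derivable from the axioms: associativity of ·, associativity and commutativity of ∥, 1 a unit for both products, [[s]] = [s], and [1] = 1. -/
/-- A poset with boxes over an alphabet `A`. -/
structure PB (A : Type) : Type 1 where
  Ev : Type
  le : Ev → Ev → Prop
  le_refl : ∀ e, le e e
  le_trans : ∀ e f g, le e f → le f g → le e g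
  le_antisymm : ∀ e f, le e f → le f e → e = f
  lab : Ev → A
  boxes : Set (Set Ev)
  boxes_ne : ∀ B ∈ boxes, B.Nonempty

/-- A homomorphism of posets with boxes: a bijection preserving labels,
order and boxes. -/
structure Hom {A : Type} (P Q : PB A) where
  toFun : P.Ev → Q.Ev
  bij : Function.Bijective toFun
  lab_eq : ∀ e, Q.lab (toFun e) = P.lab e
  mono : ∀ e f, P.le e f → Q.le (toFun e) (toFun f)
  box_pres : ∀ B ∈ P.boxes, toFun '' B ∈ Q.boxes

/-- Order-reflecting homomorphism. -/
def Hom.OrdRefl {A : Type} {P Q : PB A} (φ : Hom P Q) : Prop :=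
  ∀ e f, Q.le (φ.toFun e) (φ.toFun f) → P.le e f

/-- Box-reflecting homomorphism. -/
def Hom.BoxRefl {A : Type} {P Q : PB A} (φ : Hom P Q) : Prop :=
  ∀ B : Set P.Ev, φ.toFun '' B ∈ Q.boxes → B ∈ P.boxes

/-- Isomorphism of posets with boxes. -/
def Iso {A : Type} (P Q : PB A) : Prop :=
  ∃ φ : Hom P Q, φ.OrdRefl ∧ φ.BoxRefl

/-- `Subsume P Q` means `P ⊑ Q` : there is a homomorphism from `Q` to `P`. -/
def Subsume {A : Type} (P Q : PB A) : Prop := Nonempty (Hom Q P)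

/-- The empty poset with boxes. -/
def onePB (A : Type) : PB A where
  Ev := PEmpty
  le := fun _ _ => True
  le_refl := fun e => trivial
  le_trans := fun _ _ _ _ _ => trivial
  le_antisymm := fun e => e.elim
  lab := fun e => e.elim
  boxes := ∅
  boxes_ne := fun _ h => absurd h (Set.notMem_empty _)

/-- The atomic poset with boxes, with a single event labelled `a`. -/
def atomPB {A : Type} (a : A) : PB A where
  Ev := PUnit
  le := fun _ _ => True
  le_refl := fun _ => trivial
  le_trans := fun _ _ _ _ _ => trivial
  le_antisymm := fun _ _ _ _ => rfl
  lab := fun _ => a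
  boxes := ∅
  boxes_ne := fun _ h => absurd h (Set.notMem_empty _)

/-- The order of a sequential composition on the disjoint union of events. -/
def seqLE {A : Type} (P Q : PB A) : P.Ev ⊕ Q.Ev → P.Ev ⊕ Q.Ev → Prop
  | .inl a, .inl b => P.le a b
  | .inr a, .inr b => Q.le a b
  | .inl _, .inr _ => True
  | .inr _, .inl _ => False

/-- Sequential composition of posets with boxes. -/
def seqPB {A : Type} (P Q : PB A) : PB A where
  Ev := P.Ev ⊕ Q.Ev
  le := seqLE P Q
  le_refl := fun e => by cases e <;> simp [seqLE, PB.le_refl]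
  le_trans := fun e f g hef hfg => by
    cases e <;> cases f <;> cases g <;>
      simp_all [seqLE] <;>
      first
        | exact P.le_trans _ _ _ hef hfg
        | exact Q.le_trans _ _ _ hef hfg
  le_antisymm := fun e f hef hfe => by
    cases e <;> cases f <;> simp_all [seqLE]
    · exact P.le_antisymm _ _ hef hfe
    · exact Q.le_antisymm _ _ hef hfe
  lab := Sum.elim P.lab Q.lab
  boxes := (Set.image Sum.inl '' P.boxes) ∪ (Set.image Sum.inr '' Q.boxes)
  boxes_ne := by
    rintro B (⟨C, hC, rfl⟩ | ⟨C, hC, rfl⟩)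
    · exact ((P.boxes_ne C hC).image _)
    · exact ((Q.boxes_ne C hC).image _)

/-- The order of a parallel composition on the disjoint union of events. -/
def parLE {A : Type} (P Q : PB A) : P.Ev ⊕ Q.Ev → P.Ev ⊕ Q.Ev → Prop
  | .inl a, .inl b => P.le a b
  | .inr a, .inr b => Q.le a b
  | .inl _, .inr _ => False
  | .inr _, .inl _ => False

/-- Parallel composition of posets with boxes. -/
def parPB {A : Type} (P Q : PB A) : PB A where
  Ev := P.Ev ⊕ Q.Ev
  le := parLE P Q
  le_refl := fun e => by cases e <;> simp [parLE, PB.le_refl]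
  le_trans := fun e f g hef hfg => by
    cases e <;> cases f <;> cases g <;>
      simp_all [parLE] <;>
      first
        | exact P.le_trans _ _ _ hef hfg
        | exact Q.le_trans _ _ _ hef hfg
  le_antisymm := fun e f hef hfe => by
    cases e <;> cases f <;> simp_all [parLE]
    · exact P.le_antisymm _ _ hef hfe
    · exact Q.le_antisymm _ _ hef hfe
  lab := Sum.elim P.lab Q.lab
  boxes := (Set.image Sum.inl '' P.boxes) ∪ (Set.image Sum.inr '' Q.boxes)
  boxes_ne := by
    rintro B (⟨C, hC, rfl⟩ | ⟨C, hC, rfl⟩)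
    · exact ((P.boxes_ne C hC).image _)
    · exact ((Q.boxes_ne C hC).image _)

/-- Boxing: add the full (nonempty) set of events as a box. -/
def boxPB {A : Type} (P : PB A) : PB A where
  Ev := P.Ev
  le := P.le
  le_refl := P.le_refl
  le_trans := P.le_trans
  le_antisymm := P.le_antisymm
  lab := P.lab
  boxes := P.boxes ∪ {B | B = Set.univ ∧ B.Nonempty}
  boxes_ne := by
    rintro B (hB | ⟨rfl, hne⟩)
    · exact P.boxes_ne B hB
    · exact hne

/-- Restriction of a poset with boxes to a subset of its events. -/
def restrictPB {A : Type} (P : PB A) (S : Set P.Ev) : PB A where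
  Ev := S
  le := fun x y => P.le x.1 y.1
  le_refl := fun x => P.le_refl x.1
  le_trans := fun x y z => P.le_trans x.1 y.1 z.1
  le_antisymm := fun x y h h' => Subtype.ext (P.le_antisymm _ _ h h')
  lab := fun x => P.lab x.1
  boxes := {B | Subtype.val '' B ∈ P.boxes}
  boxes_ne := fun B hB => by
    rcases P.boxes_ne _ hB with ⟨x, ⟨y, hy, rfl⟩⟩
    exact ⟨y, hy⟩

/-- Forbidden pattern P1 (the `N` pattern). -/
def hasP1 {A : Type} (P : PB A) : Prop :=
  ∃ e1 e2 e3 e4 : P.Ev,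
    P.le e1 e3 ∧ P.le e2 e3 ∧ P.le e2 e4 ∧
    ¬ P.le e1 e4 ∧ ¬ P.le e2 e1 ∧ ¬ P.le e4 e3

/-- Forbidden pattern P2 (overlapping non-nested boxes). -/
def hasP2 {A : Type} (P : PB A) : Prop :=
  ∃ (Bx Cx : Set P.Ev) (e1 e2 e3 : P.Ev),
    Bx ∈ P.boxes ∧ Cx ∈ P.boxes ∧
    e1 ∈ Bx \ Cx ∧ e2 ∈ Bx ∩ Cx ∧ e3 ∈ Cx \ Bx

/-- Forbidden pattern P3. -/
def hasP3 {A : Type} (P : PB A) : Prop :=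
  ∃ (Bx : Set P.Ev) (e1 e2 e3 : P.Ev),
    Bx ∈ P.boxes ∧ e1 ∉ Bx ∧ e2 ∈ Bx ∧ e3 ∈ Bx ∧
    P.le e1 e2 ∧ ¬ P.le e1 e3

/-- Forbidden pattern P4. -/
def hasP4 {A : Type} (P : PB A) : Prop :=
  ∃ (Bx : Set P.Ev) (e1 e2 e3 : P.Ev),
    Bx ∈ P.boxes ∧ e1 ∉ Bx ∧ e2 ∈ Bx ∧ e3 ∈ Bx ∧
    P.le e2 e1 ∧ ¬ P.le e3 e1

/-- A set of events is non-trivial if it is neither empty nor everything. -/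
def NonTrivial {A : Type} (P : PB A) (S : Set P.Ev) : Prop :=
  S ≠ ∅ ∧ S ≠ Set.univ

/-- A set of events is nested if every box is contained in it or disjoint from it. -/
def Nested {A : Type} (P : PB A) (S : Set P.Ev) : Prop :=
  ∀ B ∈ P.boxes, B ⊆ S ∨ B ∩ S = ∅

/-- A set of events is prefix if every event in it is below every event outside. -/
def IsPrefix {A : Type} (P : PB A) (S : Set P.Ev) : Prop :=
  ∀ e ∈ S, ∀ f ∉ S, P.le e f

/-- A set of events is isolated if its events are incomparable with outside events. -/
def Isolated {A : Type} (P : PB A) (S : Set P.Ev) : Prop :=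
  ∀ e ∈ S, ∀ f ∉ S, ¬ P.le e f ∧ ¬ P.le f e
/-- Series–parallel terms. -/
inductive Term (A : Type) : Type
  | one : Term A
  | atom (a : A) : Term A
  | seq (s t : Term A) : Term A
  | par (s t : Term A) : Term A
  | box (s : Term A) : Term A

/-- Interpretation of terms as posets with boxes. -/
def semT {A : Type} : Term A → PB A
  | .one => onePB A
  | .atom a => atomPB a
  | .seq s t => seqPB (semT s) (semT t)
  | .par s t => parPB (semT s) (semT t)
  | .box s => boxPB (semT s)

/-- Derivability in the equational theory of bimonoids with boxes. -/
inductive BimEq {A : Type} : Term A → Term A → Prop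
  | seq_assoc (s t u : Term A) : BimEq (.seq s (.seq t u)) (.seq (.seq s t) u)
  | par_assoc (s t u : Term A) : BimEq (.par s (.par t u)) (.par (.par s t) u)
  | par_comm (s t : Term A) : BimEq (.par s t) (.par t s)
  | seq_unit_l (s : Term A) : BimEq (.seq .one s) s
  | seq_unit_r (s : Term A) : BimEq (.seq s .one) s
  | par_unit (s : Term A) : BimEq (.par .one s) s
  | box_box (s : Term A) : BimEq (.box (.box s)) (.box s)
  | box_one : BimEq (.box .one) .one
  | refl (s : Term A) : BimEq s s
  | symm {s t : Term A} : BimEq s t → BimEq t s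
  | trans {s t u : Term A} : BimEq s t → BimEq t u → BimEq s u
  | seq_congr {s s' t t' : Term A} : BimEq s s' → BimEq t t' → BimEq (.seq s t) (.seq s' t')
  | par_congr {s s' t t' : Term A} : BimEq s s' → BimEq t t' → BimEq (.par s t) (.par s' t')
  | box_congr {s s' : Term A} : BimEq s s' → BimEq (.box s) (.box s')

/-- Derivability in the inequational theory of concurrent monoids with boxes:
bimonoid axioms (in both directions) together with exchange and box elimination. -/
inductive CMLe {A : Type} : Term A → Term A → Prop
  | of_eq {s t : Term A} : BimEq s t → CMLe s t
  | exchange (s t u v : Term A) :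
      CMLe (.seq (.par s t) (.par u v)) (.par (.seq s u) (.seq t v))
  | box_le (s : Term A) : CMLe (.box s) s
  | refl (s : Term A) : CMLe s s
  | trans {s t u : Term A} : CMLe s t → CMLe t u → CMLe s u
  | seq_congr {s s' t t' : Term A} : CMLe s s' → CMLe t t' → CMLe (.seq s t) (.seq s' t')
  | par_congr {s s' t t' : Term A} : CMLe s s' → CMLe t t' → CMLe (.par s t) (.par s' t')
  | box_congr {s s' : Term A} : CMLe s s' → CMLe (.box s) (.box s')


/-! ### Auxiliary development -/

section Aux

variable {A : Type}

attribute [reducible] seqPB parPB boxPB onePB restrictPB semT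

open Classical

/-- Equivalence-based characterization of isomorphism. -/
def IsoE (P Q : PB A) : Prop :=
  ∃ e : P.Ev ≃ Q.Ev,
    (∀ x, Q.lab (e x) = P.lab x) ∧
    (∀ a b, P.le a b ↔ Q.le (e a) (e b)) ∧
    (∀ B : Set P.Ev, B ∈ P.boxes ↔ e '' B ∈ Q.boxes)

theorem iso_iff_isoE (P Q : PB A) : Iso P Q ↔ IsoE P Q := by
  constructor
  · rintro ⟨φ, hord, hboxr⟩
    refine ⟨Equiv.ofBijective φ.toFun φ.bij, φ.lab_eq, ?_, ?_⟩
    · intro a b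
      exact ⟨φ.mono a b, hord a b⟩
    · intro B
      constructor
      · intro hB; exact φ.box_pres B hB
      · intro hB; exact hboxr B hB
  · rintro ⟨e, hlab, hle, hbox⟩
    refine ⟨⟨e, e.bijective, hlab, fun a b h => (hle a b).1 h, fun B hB => (hbox B).1 hB⟩,
      fun a b h => (hle a b).2 h, fun B hB => (hbox B).2 hB⟩

theorem isoERefl (P : PB A) : IsoE P P :=
  ⟨Equiv.refl _, fun _ => rfl, fun _ _ => by simp, fun B => by simp⟩

theorem isoESymm {P Q : PB A} (h : IsoE P Q) : IsoE Q P := by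
  obtain ⟨e, hlab, hle, hbox⟩ := h
  refine ⟨e.symm, ?_, ?_, ?_⟩
  · intro x; rw [← hlab (e.symm x), e.apply_symm_apply]
  · intro a b
    rw [hle (e.symm a) (e.symm b), e.apply_symm_apply, e.apply_symm_apply]
  · intro B
    rw [hbox (e.symm '' B)]
    rw [show e '' (e.symm '' B) = B from by
      rw [Set.image_image]; simp]

theorem isoETrans {P Q R : PB A} (h1 : IsoE P Q) (h2 : IsoE Q R) : IsoE P R := by
  obtain ⟨e, hlab, hle, hbox⟩ := h1
  obtain ⟨f, hlab', hle', hbox'⟩ := h2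
  refine ⟨e.trans f, ?_, ?_, ?_⟩
  · intro x; simp [Equiv.trans, hlab', hlab]
  · intro a b; rw [hle a b, hle' (e a) (e b)]; rfl
  · intro B
    rw [hbox B, hbox' (e '' B), Set.image_image]; rfl

theorem mem_sum_boxes {P Q : PB A} {B : Set (P.Ev ⊕ Q.Ev)} :
    B ∈ (Set.image Sum.inl '' P.boxes) ∪ (Set.image Sum.inr '' Q.boxes) ↔
      (∃ C ∈ P.boxes, B = Sum.inl '' C) ∨ (∃ C ∈ Q.boxes, B = Sum.inr '' C) := by
  constructor
  · rintro (⟨C, hC, rfl⟩ | ⟨C, hC, rfl⟩)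
    · exact Or.inl ⟨C, hC, rfl⟩
    · exact Or.inr ⟨C, hC, rfl⟩
  · rintro (⟨C, hC, rfl⟩ | ⟨C, hC, rfl⟩)
    · exact Or.inl ⟨C, hC, rfl⟩
    · exact Or.inr ⟨C, hC, rfl⟩

theorem mem_seq_boxes {P Q : PB A} {B : Set (P.Ev ⊕ Q.Ev)} :
    B ∈ (seqPB P Q).boxes ↔
      (∃ C ∈ P.boxes, B = Sum.inl '' C) ∨ (∃ C ∈ Q.boxes, B = Sum.inr '' C) :=
  mem_sum_boxes

theorem mem_par_boxes {P Q : PB A} {B : Set (P.Ev ⊕ Q.Ev)} :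
    B ∈ (parPB P Q).boxes ↔
      (∃ C ∈ P.boxes, B = Sum.inl '' C) ∨ (∃ C ∈ Q.boxes, B = Sum.inr '' C) :=
  mem_sum_boxes


theorem image_image_inl {α β γ : Type} (f : α → γ) (C : Set α) :
    (Sum.map f (id : β → β)) '' (Sum.inl '' C) = Sum.inl '' (f '' C) := by
  rw [Set.image_image, Set.image_image]; rfl

theorem congrSeqE {P P' Q Q' : PB A} (h1 : IsoE P P') (h2 : IsoE Q Q') :
    IsoE (seqPB P Q) (seqPB P' Q') := by
  obtain ⟨e, hlab, hle, hbox⟩ := h1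
  obtain ⟨f, hlab', hle', hbox'⟩ := h2
  refine ⟨Equiv.sumCongr e f, ?_, ?_, ?_⟩
  · rintro (x | x) <;> simp [seqPB, hlab, hlab']
  · rintro (a | a) (b | b) <;> simp [seqPB, seqLE, hle, hle']
  · intro B
    rw [mem_seq_boxes, mem_seq_boxes]
    constructor
    · rintro (⟨C, hC, rfl⟩ | ⟨C, hC, rfl⟩)
      · refine Or.inl ⟨e '' C, (hbox C).1 hC, ?_⟩
        rw [Set.image_image, Set.image_image]; rfl
      · refine Or.inr ⟨f '' C, (hbox' C).1 hC, ?_⟩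
        rw [Set.image_image, Set.image_image]; rfl
    · rintro (⟨C, hC, hB⟩ | ⟨C, hC, hB⟩)
      · refine Or.inl ⟨e.symm '' C, (hbox _).2 (by rw [Set.image_image]; simpa using hC), ?_⟩
        have : B = (Equiv.sumCongr e f).symm '' (Sum.inl '' C) := by
          rw [← hB]; exact (Equiv.symm_image_image _ _).symm
        rw [this, Set.image_image, Set.image_image]; rfl
      · refine Or.inr ⟨f.symm '' C, (hbox' _).2 (by rw [Set.image_image]; simpa using hC), ?_⟩
        have : B = (Equiv.sumCongr e f).symm '' (Sum.inr '' C) := by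
          rw [← hB]; exact (Equiv.symm_image_image _ _).symm
        rw [this, Set.image_image, Set.image_image]; rfl

theorem congrParE {P P' Q Q' : PB A} (h1 : IsoE P P') (h2 : IsoE Q Q') :
    IsoE (parPB P Q) (parPB P' Q') := by
  obtain ⟨e, hlab, hle, hbox⟩ := h1
  obtain ⟨f, hlab', hle', hbox'⟩ := h2
  refine ⟨Equiv.sumCongr e f, ?_, ?_, ?_⟩
  · rintro (x | x) <;> simp [parPB, hlab, hlab']
  · rintro (a | a) (b | b) <;> simp [parPB, parLE, hle, hle']
  · intro B
    rw [mem_par_boxes, mem_par_boxes]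
    constructor
    · rintro (⟨C, hC, rfl⟩ | ⟨C, hC, rfl⟩)
      · refine Or.inl ⟨e '' C, (hbox C).1 hC, ?_⟩
        rw [Set.image_image, Set.image_image]; rfl
      · refine Or.inr ⟨f '' C, (hbox' C).1 hC, ?_⟩
        rw [Set.image_image, Set.image_image]; rfl
    · rintro (⟨C, hC, hB⟩ | ⟨C, hC, hB⟩)
      · refine Or.inl ⟨e.symm '' C, (hbox _).2 (by rw [Set.image_image]; simpa using hC), ?_⟩
        have : B = (Equiv.sumCongr e f).symm '' (Sum.inl '' C) := by
          rw [← hB]; exact (Equiv.symm_image_image _ _).symm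
        rw [this, Set.image_image, Set.image_image]; rfl
      · refine Or.inr ⟨f.symm '' C, (hbox' _).2 (by rw [Set.image_image]; simpa using hC), ?_⟩
        have : B = (Equiv.sumCongr e f).symm '' (Sum.inr '' C) := by
          rw [← hB]; exact (Equiv.symm_image_image _ _).symm
        rw [this, Set.image_image, Set.image_image]; rfl

theorem congrBoxE {P P' : PB A} (h : IsoE P P') : IsoE (boxPB P) (boxPB P') := by
  obtain ⟨e, hlab, hle, hbox⟩ := h
  refine ⟨e, hlab, hle, ?_⟩
  intro B
  show B ∈ P.boxes ∪ _ ↔ e '' B ∈ P'.boxes ∪ _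
  constructor
  · rintro (hB | ⟨rfl, hne⟩)
    · exact Or.inl ((hbox B).1 hB)
    · refine Or.inr ⟨?_, hne.image e⟩
      rw [Set.image_univ, Equiv.range_eq_univ]
  · rintro (hB | ⟨huniv, hne⟩)
    · exact Or.inl ((hbox B).2 hB)
    · refine Or.inr ⟨?_, ?_⟩
      · have := congrArg (fun S => e.symm '' S) huniv
        simpa [Set.image_image, Set.image_univ, Equiv.range_eq_univ] using this
      · rcases hne with ⟨y, ⟨x, hx, rfl⟩⟩; exact ⟨x, hx⟩


theorem image_eq_of_image_eq {α β : Type} (g : α ≃ β) {B : Set α} {X : Set β}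
    (h : g '' B = X) : B = g.symm '' X := by
  rw [← h]; exact (Equiv.symm_image_image _ _).symm

theorem boxes_sum_assoc {P Q R : PB A} (B : Set (P.Ev ⊕ (Q.Ev ⊕ R.Ev))) :
    B ∈ (seqPB P (seqPB Q R)).boxes ↔
      (Equiv.sumAssoc P.Ev Q.Ev R.Ev).symm '' B ∈ (seqPB (seqPB P Q) R).boxes := by
  constructor
  · intro h
    rcases mem_seq_boxes.1 h with ⟨C, hC, rfl⟩ | ⟨C, hC, rfl⟩
    · refine mem_seq_boxes.2 (Or.inl ⟨Sum.inl '' C, mem_seq_boxes.2 (Or.inl ⟨C, hC, rfl⟩), ?_⟩)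
      rw [Set.image_image, Set.image_image]
      apply Set.image_congr; intro x _; first | rfl | simp [Equiv.sumAssoc]
    · rcases mem_seq_boxes.1 hC with ⟨D, hD, rfl⟩ | ⟨D, hD, rfl⟩
      · refine mem_seq_boxes.2 (Or.inl ⟨Sum.inr '' D, mem_seq_boxes.2 (Or.inr ⟨D, hD, rfl⟩), ?_⟩)
        rw [Set.image_image, Set.image_image, Set.image_image]
        apply Set.image_congr; intro x _; first | rfl | simp [Equiv.sumAssoc]
      · refine mem_seq_boxes.2 (Or.inr ⟨D, hD, ?_⟩)
        rw [Set.image_image, Set.image_image]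
        apply Set.image_congr; intro x _; first | rfl | simp [Equiv.sumAssoc]
  · intro h
    rcases mem_seq_boxes.1 h with ⟨C, hC, hB⟩ | ⟨C, hC, hB⟩
    · have hB' := image_eq_of_image_eq _ hB
      rw [Equiv.symm_symm] at hB'
      rcases mem_seq_boxes.1 hC with ⟨D, hD, rfl⟩ | ⟨D, hD, rfl⟩
      · subst hB'
        refine mem_seq_boxes.2 (Or.inl ⟨D, hD, ?_⟩)
        rw [Set.image_image, Set.image_image]
        apply Set.image_congr; intro x _; first | rfl | simp [Equiv.sumAssoc]
      · subst hB'
        refine mem_seq_boxes.2 (Or.inr ⟨Sum.inl '' D, mem_seq_boxes.2 (Or.inl ⟨D, hD, rfl⟩), ?_⟩)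
        rw [Set.image_image, Set.image_image, Set.image_image]
        apply Set.image_congr; intro x _; first | rfl | simp [Equiv.sumAssoc]
    · have hB' := image_eq_of_image_eq _ hB
      rw [Equiv.symm_symm] at hB'
      subst hB'
      refine mem_seq_boxes.2 (Or.inr ⟨Sum.inr '' C, mem_seq_boxes.2 (Or.inr ⟨C, hC, rfl⟩), ?_⟩)
      rw [Set.image_image, Set.image_image]
      apply Set.image_congr; intro x _; first | rfl | simp [Equiv.sumAssoc]

theorem isoESeqAssoc (P Q R : PB A) :
    IsoE (seqPB P (seqPB Q R)) (seqPB (seqPB P Q) R) := by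
  refine ⟨(Equiv.sumAssoc P.Ev Q.Ev R.Ev).symm, ?_, ?_, ?_⟩
  · rintro (x | (x | x)) <;> rfl
  · rintro (a | (a | a)) (b | (b | b)) <;> simp [seqPB, seqLE, Equiv.sumAssoc]
  · intro B; exact boxes_sum_assoc B

theorem isoEParAssoc (P Q R : PB A) :
    IsoE (parPB P (parPB Q R)) (parPB (parPB P Q) R) := by
  refine ⟨(Equiv.sumAssoc P.Ev Q.Ev R.Ev).symm, ?_, ?_, ?_⟩
  · rintro (x | (x | x)) <;> rfl
  · rintro (a | (a | a)) (b | (b | b)) <;> simp [parPB, parLE, Equiv.sumAssoc]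
  · intro B
    show B ∈ (seqPB P (seqPB Q R)).boxes ↔ _ ∈ (seqPB (seqPB P Q) R).boxes
    exact boxes_sum_assoc B

theorem isoEParComm (P Q : PB A) : IsoE (parPB P Q) (parPB Q P) := by
  refine ⟨Equiv.sumComm P.Ev Q.Ev, ?_, ?_, ?_⟩
  · rintro (x | x) <;> rfl
  · rintro (a | a) (b | b) <;> simp [parPB, parLE, Equiv.sumComm]
  · intro B
    constructor
    · intro h
      rcases mem_par_boxes.1 h with ⟨C, hC, rfl⟩ | ⟨C, hC, rfl⟩
      · refine mem_par_boxes.2 (Or.inr ⟨C, hC, ?_⟩)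
        rw [Set.image_image]; apply Set.image_congr; intro x _; rfl
      · refine mem_par_boxes.2 (Or.inl ⟨C, hC, ?_⟩)
        rw [Set.image_image]; apply Set.image_congr; intro x _; rfl
    · intro h
      rcases mem_par_boxes.1 h with ⟨C, hC, hB⟩ | ⟨C, hC, hB⟩
      · have hB' := image_eq_of_image_eq _ hB
        subst hB'
        refine mem_par_boxes.2 (Or.inr ⟨C, hC, ?_⟩)
        rw [Set.image_image]; apply Set.image_congr; intro x _; rfl
      · have hB' := image_eq_of_image_eq _ hB
        subst hB'
        refine mem_par_boxes.2 (Or.inl ⟨C, hC, ?_⟩)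
        rw [Set.image_image]; apply Set.image_congr; intro x _; rfl

/-- The equivalence `PEmpty ⊕ β ≃ β`. -/
def pemptySumEquiv (β : Type) : PEmpty ⊕ β ≃ β where
  toFun := Sum.elim PEmpty.elim id
  invFun := Sum.inr
  left_inv := by rintro (x | x); exact x.elim; rfl
  right_inv := fun _ => rfl

/-- The equivalence `β ⊕ PEmpty ≃ β`. -/
def sumPemptyEquiv (β : Type) : β ⊕ PEmpty ≃ β where
  toFun := Sum.elim id PEmpty.elim
  invFun := Sum.inl
  left_inv := by rintro (x | x); rfl; exact x.elim
  right_inv := fun _ => rfl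

theorem boxes_pempty_left {P : PB A} (B : Set (PEmpty ⊕ P.Ev)) :
    B ∈ (seqPB (onePB A) P).boxes ↔ (pemptySumEquiv P.Ev) '' B ∈ P.boxes := by
  constructor
  · intro h
    rcases mem_seq_boxes.1 h with ⟨C, hC, rfl⟩ | ⟨C, hC, rfl⟩
    · exact absurd hC (Set.notMem_empty _)
    · rw [Set.image_image]
      convert hC using 1; exact Set.image_id' C
  · intro h
    refine mem_seq_boxes.2 (Or.inr ⟨(pemptySumEquiv P.Ev) '' B, h, ?_⟩)
    ext x
    rcases x with x | a
    · exact ⟨fun hx => absurd hx (fun hx => by rcases x with ⟨⟩), fun ⟨y, hy, hya⟩ => by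
        cases hya⟩
    · constructor
      · intro hx
        exact ⟨a, ⟨Sum.inr a, hx, rfl⟩, rfl⟩
      · rintro ⟨y, ⟨z, hz, rfl⟩, hya⟩
        rcases z with z | z
        · exact z.elim
        · cases hya; exact hz

theorem boxes_pempty_right {P : PB A} (B : Set (P.Ev ⊕ PEmpty)) :
    B ∈ (seqPB P (onePB A)).boxes ↔ (sumPemptyEquiv P.Ev) '' B ∈ P.boxes := by
  constructor
  · intro h
    rcases mem_seq_boxes.1 h with ⟨C, hC, rfl⟩ | ⟨C, hC, rfl⟩
    · rw [Set.image_image]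
      convert hC using 1; exact Set.image_id' C
    · exact absurd hC (Set.notMem_empty _)
  · intro h
    refine mem_seq_boxes.2 (Or.inl ⟨(sumPemptyEquiv P.Ev) '' B, h, ?_⟩)
    ext x
    rcases x with a | x
    · constructor
      · intro hx
        exact ⟨a, ⟨Sum.inl a, hx, rfl⟩, rfl⟩
      · rintro ⟨y, ⟨z, hz, rfl⟩, hya⟩
        rcases z with z | z
        · cases hya; exact hz
        · exact z.elim
    · exact ⟨fun hx => absurd hx (fun hx => by rcases x with ⟨⟩), fun ⟨y, hy, hya⟩ => by
        cases hya⟩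

theorem isoESeqUnitL (P : PB A) : IsoE (seqPB (onePB A) P) P := by
  refine ⟨pemptySumEquiv P.Ev, ?_, ?_, ?_⟩
  · rintro (x | x); exact x.elim; rfl
  · rintro (a | a) (b | b) <;> first | exact absurd rfl (by rintro ⟨⟩) | skip
    all_goals try exact a.elim
    all_goals try exact b.elim
    exact Iff.rfl
  · exact boxes_pempty_left

theorem isoESeqUnitR (P : PB A) : IsoE (seqPB P (onePB A)) P := by
  refine ⟨sumPemptyEquiv P.Ev, ?_, ?_, ?_⟩
  · rintro (x | x); rfl; exact x.elim
  · rintro (a | a) (b | b)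
    all_goals try exact a.elim
    all_goals try exact b.elim
    exact Iff.rfl
  · exact boxes_pempty_right

theorem isoEParUnitL (P : PB A) : IsoE (parPB (onePB A) P) P := by
  refine ⟨pemptySumEquiv P.Ev, ?_, ?_, ?_⟩
  · rintro (x | x); exact x.elim; rfl
  · rintro (a | a) (b | b)
    all_goals try exact a.elim
    all_goals try exact b.elim
    exact Iff.rfl
  · intro B
    show B ∈ (seqPB (onePB A) P).boxes ↔ _
    exact boxes_pempty_left B

theorem isoEBoxBox (P : PB A) : IsoE (boxPB (boxPB P)) (boxPB P) := by
  rw [← iso_iff_isoE]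
  refine ⟨⟨fun x => x, Function.bijective_id, fun _ => rfl, fun _ _ h => h, ?_⟩, ?_, ?_⟩
  · intro B hB
    rw [Set.image_id']
    rcases hB with (h | h) | h
    · exact Or.inl h
    · exact Or.inr h
    · exact Or.inr h
  · exact fun _ _ h => h
  · intro B hB
    rw [Set.image_id'] at hB
    rcases hB with h | h
    · exact Or.inl (Or.inl h)
    · exact Or.inl (Or.inr h)

theorem isoEBoxOne : IsoE (boxPB (onePB A)) (onePB A) := by
  rw [← iso_iff_isoE]
  refine ⟨⟨fun x => x, Function.bijective_id, fun x => x.elim, fun a _ _ => a.elim, ?_⟩,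
    fun a => a.elim, ?_⟩
  · intro B hB
    rw [Set.image_id']
    rcases hB with h | ⟨rfl, x, hx⟩
    · exact h
    · exact x.elim
  · intro B hB
    rw [Set.image_id'] at hB
    exact absurd hB (Set.notMem_empty _)

theorem soundnessE {s t : Term A} (h : BimEq s t) : IsoE (semT s) (semT t) := by
  induction h with
  | seq_assoc s t u => exact isoESeqAssoc _ _ _
  | par_assoc s t u => exact isoEParAssoc _ _ _
  | par_comm s t => exact isoEParComm _ _
  | seq_unit_l s => exact isoESeqUnitL _
  | seq_unit_r s => exact isoESeqUnitR _
  | par_unit s => exact isoEParUnitL _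
  | box_box s => exact isoEBoxBox _
  | box_one => exact isoEBoxOne
  | refl s => exact isoERefl _
  | symm _ ih => exact isoESymm ih
  | trans _ _ ih1 ih2 => exact isoETrans ih1 ih2
  | seq_congr _ _ ih1 ih2 => exact congrSeqE ih1 ih2
  | par_congr _ _ ih1 ih2 => exact congrParE ih1 ih2
  | box_congr _ ih => exact congrBoxE ih


/-- Size of a term. -/
def tsize {A : Type} : Term A → Nat
  | .one => 1
  | .atom _ => 1
  | .seq s t => tsize s + tsize t + 1
  | .par s t => tsize s + tsize t + 1
  | .box s => tsize s + 1

/-- Normal-form predicate for terms. -/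
inductive TNormal {A : Type} : Term A → Prop
  | one : TNormal .one
  | atom (a : A) : TNormal (.atom a)
  | seq {s t : Term A} : TNormal s → TNormal t → s ≠ .one → t ≠ .one → TNormal (.seq s t)
  | par {s t : Term A} : TNormal s → TNormal t → s ≠ .one → t ≠ .one → TNormal (.par s t)
  | box {s : Term A} : TNormal s → s ≠ .one → (∀ u, s ≠ .box u) → TNormal (.box s)

theorem normal_nonempty {s : Term A} (h : TNormal s) (hne : s ≠ .one) :
    Nonempty (semT s).Ev := by
  induction h with
  | one => exact absurd rfl hne
  | atom a => exact ⟨PUnit.unit⟩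
  | seq h1 h2 hn1 hn2 ih1 ih2 => exact ⟨Sum.inl (ih1 hn1).some⟩
  | par h1 h2 hn1 hn2 ih1 ih2 => exact ⟨Sum.inl (ih1 hn1).some⟩
  | box h1 hn1 hnb ih => exact ih hn1

theorem noUnivBox {s : Term A} (h : TNormal s) (hnb : ∀ u, s ≠ Term.box u) :
    (Set.univ : Set (semT s).Ev) ∉ (semT s).boxes := by
  cases h with
  | one => exact Set.notMem_empty _
  | atom a => exact Set.notMem_empty _
  | @seq s t h1 h2 hn1 hn2 =>
    intro hmem
    rcases mem_seq_boxes.1 hmem with ⟨C, _, hC⟩ | ⟨C, _, hC⟩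
    · obtain ⟨y⟩ := normal_nonempty h2 hn2
      have : Sum.inr y ∈ (Set.univ : Set (semT (Term.seq s t)).Ev) := trivial
      rw [hC] at this
      obtain ⟨c, _, hc⟩ := this
      cases hc
    · obtain ⟨y⟩ := normal_nonempty h1 hn1
      have : Sum.inl y ∈ (Set.univ : Set (semT (Term.seq s t)).Ev) := trivial
      rw [hC] at this
      obtain ⟨c, _, hc⟩ := this
      cases hc
  | @par s t h1 h2 hn1 hn2 =>
    intro hmem
    rcases mem_par_boxes.1 hmem with ⟨C, _, hC⟩ | ⟨C, _, hC⟩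
    · obtain ⟨y⟩ := normal_nonempty h2 hn2
      have : Sum.inr y ∈ (Set.univ : Set (semT (Term.par s t)).Ev) := trivial
      rw [hC] at this
      obtain ⟨c, _, hc⟩ := this
      cases hc
    · obtain ⟨y⟩ := normal_nonempty h1 hn1
      have : Sum.inl y ∈ (Set.univ : Set (semT (Term.par s t)).Ev) := trivial
      rw [hC] at this
      obtain ⟨c, _, hc⟩ := this
      cases hc
  | box h1 hn1 hnb1 => exact absurd rfl (hnb _)

theorem univ_box_of_box {s : Term A} (h : TNormal s) (hne : s ≠ .one) :
    (Set.univ : Set (semT (Term.box s)).Ev) ∈ (semT (Term.box s)).boxes := by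
  refine Or.inr ⟨rfl, ?_⟩
  obtain ⟨x⟩ := normal_nonempty h hne
  exact ⟨x, trivial⟩

theorem box_shape {t : Term A} (h : TNormal t)
    (hu : (Set.univ : Set (semT t).Ev) ∈ (semT t).boxes) : ∃ t', t = Term.box t' := by
  cases t with
  | box t' => exact ⟨t', rfl⟩
  | one => exact absurd hu (noUnivBox h (by intro u h; cases h))
  | atom a => exact absurd hu (noUnivBox h (by intro u h; cases h))
  | seq a b => exact absurd hu (noUnivBox h (by intro u h; cases h))
  | par a b => exact absurd hu (noUnivBox h (by intro u h; cases h))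

theorem parUnitR (s : Term A) : BimEq (Term.par s .one) s :=
  BimEq.trans (BimEq.par_comm _ _) (BimEq.par_unit _)

theorem parMedial (a b c d : Term A) :
    BimEq (Term.par (.par a b) (.par c d)) (Term.par (.par a c) (.par b d)) := by
  refine BimEq.trans (BimEq.symm (BimEq.par_assoc a b (.par c d))) ?_
  refine BimEq.trans (BimEq.par_congr (BimEq.refl a) ?_) (BimEq.par_assoc a c (.par b d))
  refine BimEq.trans (BimEq.par_assoc b c d) ?_
  refine BimEq.trans (BimEq.par_congr (BimEq.par_comm b c) (BimEq.refl d)) ?_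
  exact BimEq.symm (BimEq.par_assoc c b d)

theorem tnormalize (s : Term A) : ∃ n : Term A, TNormal n ∧ BimEq s n := by
  induction s with
  | one => exact ⟨.one, TNormal.one, BimEq.refl _⟩
  | atom a => exact ⟨.atom a, TNormal.atom a, BimEq.refl _⟩
  | seq s t ihs iht =>
    obtain ⟨ns, hns, hes⟩ := ihs
    obtain ⟨nt, hnt, het⟩ := iht
    by_cases h1 : ns = Term.one
    · subst h1
      exact ⟨nt, hnt, BimEq.trans (BimEq.seq_congr hes het) (BimEq.seq_unit_l nt)⟩
    · by_cases h2 : nt = Term.one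
      · subst h2
        exact ⟨ns, hns, BimEq.trans (BimEq.seq_congr hes het) (BimEq.seq_unit_r ns)⟩
      · exact ⟨.seq ns nt, TNormal.seq hns hnt h1 h2, BimEq.seq_congr hes het⟩
  | par s t ihs iht =>
    obtain ⟨ns, hns, hes⟩ := ihs
    obtain ⟨nt, hnt, het⟩ := iht
    by_cases h1 : ns = Term.one
    · subst h1
      exact ⟨nt, hnt, BimEq.trans (BimEq.par_congr hes het) (BimEq.par_unit nt)⟩
    · by_cases h2 : nt = Term.one
      · subst h2
        exact ⟨ns, hns, BimEq.trans (BimEq.par_congr hes het) (parUnitR ns)⟩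
      · exact ⟨.par ns nt, TNormal.par hns hnt h1 h2, BimEq.par_congr hes het⟩
  | box s ihs =>
    obtain ⟨ns, hns, hes⟩ := ihs
    by_cases h1 : ns = Term.one
    · subst h1
      exact ⟨.one, TNormal.one, BimEq.trans (BimEq.box_congr hes) BimEq.box_one⟩
    · by_cases h2 : ∃ m, ns = Term.box m
      · obtain ⟨m, rfl⟩ := h2
        exact ⟨.box m, hns, BimEq.trans (BimEq.box_congr hes) (BimEq.box_box m)⟩
      · exact ⟨.box ns, TNormal.box hns h1 (fun u hu => h2 ⟨u, hu⟩),
          BimEq.box_congr hes⟩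


/-- Equivalence between a subset of a sum and the sum of subsets. -/
def sumSubtypeEquiv {α β : Type} (S : Set α) (T : Set β) :
    ↥(Sum.inl '' S ∪ Sum.inr '' T) ≃ ↥S ⊕ ↥T where
  toFun x := match x with
    | ⟨Sum.inl a, h⟩ => Sum.inl ⟨a, by
        rcases h with ⟨c, hc, hh⟩ | ⟨c, hc, hh⟩
        · cases hh; exact hc
        · cases hh⟩
    | ⟨Sum.inr b, h⟩ => Sum.inr ⟨b, by
        rcases h with ⟨c, hc, hh⟩ | ⟨c, hc, hh⟩
        · cases hh
        · cases hh; exact hc⟩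
  invFun := Sum.elim (fun a => ⟨Sum.inl a.1, Or.inl ⟨a.1, a.2, rfl⟩⟩)
                     (fun b => ⟨Sum.inr b.1, Or.inr ⟨b.1, b.2, rfl⟩⟩)
  left_inv := by rintro ⟨(a | b), h⟩ <;> rfl
  right_inv := by rintro (a | b) <;> rfl

theorem image_val_symm_inl {α β : Type} (S : Set α) (T : Set β) (C : Set ↥S) :
    Subtype.val '' ((sumSubtypeEquiv S T).symm '' (Sum.inl '' C)) =
      Sum.inl '' (Subtype.val '' C) := by
  ext z
  constructor
  · rintro ⟨y, ⟨w, ⟨a, ha, rfl⟩, rfl⟩, rfl⟩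
    exact ⟨a.1, ⟨a, ha, rfl⟩, rfl⟩
  · rintro ⟨c, ⟨a, ha, rfl⟩, rfl⟩
    exact ⟨⟨Sum.inl a.1, Or.inl ⟨a.1, a.2, rfl⟩⟩, ⟨Sum.inl a, ⟨a, ha, rfl⟩, rfl⟩, rfl⟩

theorem image_val_symm_inr {α β : Type} (S : Set α) (T : Set β) (C : Set ↥T) :
    Subtype.val '' ((sumSubtypeEquiv S T).symm '' (Sum.inr '' C)) =
      Sum.inr '' (Subtype.val '' C) := by
  ext z
  constructor
  · rintro ⟨y, ⟨w, ⟨a, ha, rfl⟩, rfl⟩, rfl⟩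
    exact ⟨a.1, ⟨a, ha, rfl⟩, rfl⟩
  · rintro ⟨c, ⟨a, ha, rfl⟩, rfl⟩
    exact ⟨⟨Sum.inr a.1, Or.inr ⟨a.1, a.2, rfl⟩⟩, ⟨Sum.inr a, ⟨a, ha, rfl⟩, rfl⟩, rfl⟩

theorem sumSubtypeEquiv_boxes {P Q : PB A} (S : Set P.Ev) (T : Set Q.Ev)
    (B : Set ↥(Sum.inl '' S ∪ Sum.inr '' T)) :
    Subtype.val '' B ∈ (seqPB P Q).boxes ↔
      (sumSubtypeEquiv S T) '' B ∈ (seqPB (restrictPB P S) (restrictPB Q T)).boxes := by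
  constructor
  · intro h
    rcases mem_seq_boxes.1 h with ⟨C0, hC0, hB⟩ | ⟨C0, hC0, hB⟩
    · have hsub : C0 ⊆ S := by
        intro c hc
        have : Sum.inl c ∈ Subtype.val '' B := by rw [hB]; exact ⟨c, hc, rfl⟩
        obtain ⟨x, hx, hval⟩ := this
        rcases x.2 with ⟨d, hd, hh⟩ | ⟨d, hd, hh⟩
        · rw [hval] at hh; injection hh with hh'; subst hh'; exact hd
        · rw [hval] at hh; simp at hh
      set C : Set ↥S := {a | a.1 ∈ C0} with hCdef
      have hval : Subtype.val '' C = C0 := by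
        ext c
        constructor
        · rintro ⟨a, ha, rfl⟩; exact ha
        · intro hc; exact ⟨⟨c, hsub hc⟩, hc, rfl⟩
      have hBeq : B = (sumSubtypeEquiv S T).symm '' (Sum.inl '' C) := by
        apply Set.image_injective.mpr Subtype.val_injective
        rw [image_val_symm_inl, hval, hB]
      refine mem_seq_boxes.2 (Or.inl ⟨C, ?_, ?_⟩)
      · show Subtype.val '' C ∈ P.boxes
        rw [hval]; exact hC0
      · rw [hBeq, Equiv.image_symm_image]
    · have hsub : C0 ⊆ T := by
        intro c hc
        have : Sum.inr c ∈ Subtype.val '' B := by rw [hB]; exact ⟨c, hc, rfl⟩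
        obtain ⟨x, hx, hval⟩ := this
        rcases x.2 with ⟨d, hd, hh⟩ | ⟨d, hd, hh⟩
        · rw [hval] at hh; simp at hh
        · rw [hval] at hh; injection hh with hh'; subst hh'; exact hd
      set C : Set ↥T := {a | a.1 ∈ C0} with hCdef
      have hval : Subtype.val '' C = C0 := by
        ext c
        constructor
        · rintro ⟨a, ha, rfl⟩; exact ha
        · intro hc; exact ⟨⟨c, hsub hc⟩, hc, rfl⟩
      have hBeq : B = (sumSubtypeEquiv S T).symm '' (Sum.inr '' C) := by
        apply Set.image_injective.mpr Subtype.val_injective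
        rw [image_val_symm_inr, hval, hB]
      refine mem_seq_boxes.2 (Or.inr ⟨C, ?_, ?_⟩)
      · show Subtype.val '' C ∈ Q.boxes
        rw [hval]; exact hC0
      · rw [hBeq, Equiv.image_symm_image]
  · intro h
    rcases mem_seq_boxes.1 h with ⟨C, hC, hB⟩ | ⟨C, hC, hB⟩
    · have hBeq := image_eq_of_image_eq _ hB
      rw [hBeq, image_val_symm_inl]
      exact mem_seq_boxes.2 (Or.inl ⟨Subtype.val '' C, hC, rfl⟩)
    · have hBeq := image_eq_of_image_eq _ hB
      rw [hBeq, image_val_symm_inr]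
      exact mem_seq_boxes.2 (Or.inr ⟨Subtype.val '' C, hC, rfl⟩)

theorem restrictSumSeqE (P Q : PB A) (S : Set P.Ev) (T : Set Q.Ev) :
    IsoE (restrictPB (seqPB P Q) (Sum.inl '' S ∪ Sum.inr '' T))
      (seqPB (restrictPB P S) (restrictPB Q T)) := by
  refine ⟨sumSubtypeEquiv S T, ?_, ?_, ?_⟩
  · rintro ⟨(a | b), h⟩ <;> rfl
  · rintro ⟨(a | b), h⟩ ⟨(c | d), h'⟩ <;> exact Iff.rfl
  · intro B
    exact sumSubtypeEquiv_boxes S T B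

theorem restrictSumParE (P Q : PB A) (S : Set P.Ev) (T : Set Q.Ev) :
    IsoE (restrictPB (parPB P Q) (Sum.inl '' S ∪ Sum.inr '' T))
      (parPB (restrictPB P S) (restrictPB Q T)) := by
  refine ⟨sumSubtypeEquiv S T, ?_, ?_, ?_⟩
  · rintro ⟨(a | b), h⟩ <;> rfl
  · rintro ⟨(a | b), h⟩ ⟨(c | d), h'⟩ <;> exact Iff.rfl
  · intro B
    show Subtype.val '' B ∈ (seqPB P Q).boxes ↔
      _ ∈ (seqPB (restrictPB P S) (restrictPB Q T)).boxes
    exact sumSubtypeEquiv_boxes S T B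

theorem restrictUnivE (P : PB A) : IsoE (restrictPB P Set.univ) P := by
  refine ⟨Equiv.Set.univ P.Ev, fun _ => rfl, fun _ _ => Iff.rfl, ?_⟩
  intro B
  show Subtype.val '' B ∈ P.boxes ↔ _
  constructor
  · intro h
    convert h using 1; rfl
  · intro h
    convert h using 1; rfl

theorem restrictEmptyE (P : PB A) : IsoE (restrictPB P ∅) (onePB A) := by
  refine ⟨⟨fun x => (Set.notMem_empty x.1 x.2).elim, fun x => x.elim,
    fun x => (Set.notMem_empty x.1 x.2).elim, fun x => x.elim⟩,
    fun x => (Set.notMem_empty x.1 x.2).elim,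
    fun a _ => (Set.notMem_empty a.1 a.2).elim, ?_⟩
  intro B
  constructor
  · intro h
    obtain ⟨y, x, hx, rfl⟩ := P.boxes_ne _ h
    exact (Set.notMem_empty x.1 x.2).elim
  · intro h
    exact absurd h (Set.notMem_empty _)

theorem restrictIsoE {P Q : PB A} (e : P.Ev ≃ Q.Ev)
    (hlab : ∀ x, Q.lab (e x) = P.lab x)
    (hle : ∀ a b, P.le a b ↔ Q.le (e a) (e b))
    (hbox : ∀ B : Set P.Ev, B ∈ P.boxes ↔ e '' B ∈ Q.boxes) (S : Set P.Ev) :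
    IsoE (restrictPB P S) (restrictPB Q (e '' S)) := by
  refine ⟨e.image S, ?_, ?_, ?_⟩
  · rintro ⟨x, hx⟩; exact hlab x
  · rintro ⟨x, hx⟩ ⟨y, hy⟩; exact hle x y
  · intro B
    show Subtype.val '' B ∈ P.boxes ↔ Subtype.val '' (e.image S '' B) ∈ Q.boxes
    have himg : Subtype.val '' (e.image S '' B) = e '' (Subtype.val '' B) := by
      ext z
      constructor
      · rintro ⟨y, ⟨a, ha, rfl⟩, rfl⟩
        exact ⟨a.1, ⟨a, ha, rfl⟩, rfl⟩
      · rintro ⟨c, ⟨a, ha, rfl⟩, rfl⟩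
        exact ⟨e.image S a, ⟨a, ha, rfl⟩, rfl⟩
    rw [himg]
    exact hbox _

theorem sum_set_decomp {α β : Type} (C : Set (α ⊕ β)) :
    C = Sum.inl '' (Sum.inl ⁻¹' C) ∪ Sum.inr '' (Sum.inr ⁻¹' C) := by
  ext x
  rcases x with a | b
  · constructor
    · intro h; exact Or.inl ⟨a, h, rfl⟩
    · rintro (⟨c, hc, hh⟩ | ⟨c, hc, hh⟩)
      · cases hh; exact hc
      · cases hh
  · constructor
    · intro h; exact Or.inr ⟨b, h, rfl⟩
    · rintro (⟨c, hc, hh⟩ | ⟨c, hc, hh⟩)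
      · cases hh
      · cases hh; exact hc

theorem sum_compl_decomp {α β : Type} (S : Set α) (T : Set β) :
    (Sum.inl '' S ∪ Sum.inr '' T)ᶜ = Sum.inl '' Sᶜ ∪ Sum.inr '' Tᶜ := by
  ext x
  rcases x with a | b
  · simp
  · simp


theorem restrictCongrSetE (P : PB A) {S S' : Set P.Ev} (h : S = S') :
    IsoE (restrictPB P S) (restrictPB P S') := by
  subst h; exact isoERefl _

theorem isoEParUnitR (P : PB A) : IsoE (parPB P (onePB A)) P :=
  isoETrans (isoEParComm _ _) (isoEParUnitL P)

theorem restrictRangeInlSeqE (P Q : PB A) :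
    IsoE (restrictPB (seqPB P Q) (Set.range Sum.inl)) P := by
  have hdec : (Set.range (Sum.inl : P.Ev → P.Ev ⊕ Q.Ev)) =
      Sum.inl '' Set.univ ∪ Sum.inr '' (∅ : Set Q.Ev) := by
    ext x; rcases x with a | b <;> simp
  exact isoETrans (restrictCongrSetE _ hdec)
    (isoETrans (restrictSumSeqE P Q _ _)
      (isoETrans (congrSeqE (restrictUnivE P) (restrictEmptyE Q)) (isoESeqUnitR P)))

theorem restrictRangeInlComplSeqE (P Q : PB A) :
    IsoE (restrictPB (seqPB P Q) (Set.range Sum.inl)ᶜ) Q := by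
  have hdec : (Set.range (Sum.inl : P.Ev → P.Ev ⊕ Q.Ev))ᶜ =
      Sum.inl '' (∅ : Set P.Ev) ∪ Sum.inr '' (Set.univ : Set Q.Ev) := by
    ext x; rcases x with a | b <;> simp
  exact isoETrans (restrictCongrSetE _ hdec)
    (isoETrans (restrictSumSeqE P Q _ _)
      (isoETrans (congrSeqE (restrictEmptyE P) (restrictUnivE Q)) (isoESeqUnitL Q)))

theorem restrictRangeInlParE (P Q : PB A) :
    IsoE (restrictPB (parPB P Q) (Set.range Sum.inl)) P := by
  have hdec : (Set.range (Sum.inl : P.Ev → P.Ev ⊕ Q.Ev)) =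
      Sum.inl '' Set.univ ∪ Sum.inr '' (∅ : Set Q.Ev) := by
    ext x; rcases x with a | b <;> simp
  exact isoETrans (restrictCongrSetE _ hdec)
    (isoETrans (restrictSumParE P Q _ _)
      (isoETrans (congrParE (restrictUnivE P) (restrictEmptyE Q)) (isoEParUnitR P)))

theorem restrictRangeInlComplParE (P Q : PB A) :
    IsoE (restrictPB (parPB P Q) (Set.range Sum.inl)ᶜ) Q := by
  have hdec : (Set.range (Sum.inl : P.Ev → P.Ev ⊕ Q.Ev))ᶜ =
      Sum.inl '' (∅ : Set P.Ev) ∪ Sum.inr '' (Set.univ : Set Q.Ev) := by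
    ext x; rcases x with a | b <;> simp
  exact isoETrans (restrictCongrSetE _ hdec)
    (isoETrans (restrictSumParE P Q _ _)
      (isoETrans (congrParE (restrictEmptyE P) (restrictUnivE Q)) (isoEParUnitL Q)))

theorem seqSplit (w : Term A) (hN : TNormal w) :
    ∀ S : Set (semT w).Ev, S.Nonempty → Sᶜ.Nonempty →
    IsPrefix (semT w) S → Nested (semT w) S →
    ∃ w1 w2 : Term A, BimEq w (.seq w1 w2) ∧ TNormal w1 ∧ TNormal w2 ∧
      w1 ≠ .one ∧ w2 ≠ .one ∧ tsize w1 + tsize w2 < tsize w ∧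
      IsoE (restrictPB (semT w) S) (semT w1) ∧
      IsoE (restrictPB (semT w) Sᶜ) (semT w2) := by
  induction w with
  | one =>
    intro S hSne _ _ _
    obtain ⟨x, _⟩ := hSne
    exact x.elim
  | atom a =>
    intro S hSne hScne _ _
    obtain ⟨x, hx⟩ := hSne
    obtain ⟨y, hy⟩ := hScne
    cases x; cases y
    exact absurd hx hy
  | par w1 w2 ih1 ih2 =>
    intro S hSne hScne hpre _
    cases hN with
    | par h1 h2 hn1 hn2 =>
      obtain ⟨x, hx⟩ := hSne
      obtain ⟨y, hy⟩ := hScne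
      exfalso
      rcases x with a | a <;> rcases y with b | b
      · obtain ⟨q0⟩ := normal_nonempty h2 hn2
        by_cases hq : Sum.inr q0 ∈ S
        · exact hpre _ hq _ hy
        · exact hpre _ hx _ hq
      · exact hpre _ hx _ hy
      · exact hpre _ hx _ hy
      · obtain ⟨p0⟩ := normal_nonempty h1 hn1
        by_cases hp : Sum.inl p0 ∈ S
        · exact hpre _ hp _ hy
        · exact hpre _ hx _ hp
  | box w' ih =>
    intro S hSne hScne _ hnest
    cases hN with
    | box h' hn' hnb' =>
      exfalso
      rcases hnest Set.univ (univ_box_of_box h' hn') with h | h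
      · obtain ⟨y, hy⟩ := hScne
        exact hy (h trivial)
      · obtain ⟨x, hx⟩ := hSne
        have : x ∈ (Set.univ : Set (semT (Term.box w')).Ev) ∩ S := ⟨trivial, hx⟩
        rw [h] at this
        exact this
  | seq w1 w2 ih1 ih2 =>
    intro S hSne hScne hpre hnest
    cases hN with
    | seq h1 h2 hn1 hn2 =>
      by_cases hcase : ∃ y : (semT w2).Ev, Sum.inr y ∈ S
      · obtain ⟨y0, hy0⟩ := hcase
        have hInlS : ∀ x : (semT w1).Ev, Sum.inl x ∈ S := by
          intro x
          by_contra hx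
          exact hpre _ hy0 _ hx
        set T0 : Set (semT w2).Ev := Sum.inr ⁻¹' S with hT0def
        have hT0ne : T0.Nonempty := ⟨y0, hy0⟩
        have hT0cne : T0ᶜ.Nonempty := by
          obtain ⟨z, hz⟩ := hScne
          rcases z with a | b
          · exact absurd (hInlS a) hz
          · exact ⟨b, hz⟩
        have hpre' : IsPrefix (semT w2) T0 := fun e he f hf => hpre _ he _ hf
        have hnest' : Nested (semT w2) T0 := by
          intro B hB
          rcases hnest (Sum.inr '' B) (mem_seq_boxes.2 (Or.inr ⟨B, hB, rfl⟩)) with h | h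
          · left; intro b hb; exact h ⟨b, hb, rfl⟩
          · right
            ext b
            simp only [Set.mem_inter_iff, Set.mem_empty_iff_false, iff_false]
            rintro ⟨hb1, hb2⟩
            have : Sum.inr b ∈ (Sum.inr '' B) ∩ S := ⟨⟨b, hb1, rfl⟩, hb2⟩
            rw [h] at this
            exact this
        obtain ⟨a, b, heq, hna, hnb, hane, hbne, hsz, hiso1, hiso2⟩ :=
          ih2 h2 T0 hT0ne hT0cne hpre' hnest'
        have hUnivPre : Sum.inl ⁻¹' S = (Set.univ : Set (semT w1).Ev) := by
          ext x; simpa using hInlS x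
        have hSdec : S = Sum.inl '' Set.univ ∪ Sum.inr '' T0 := by
          have := sum_set_decomp S
          rw [hUnivPre] at this
          exact this
        have hScdec : Sᶜ = Sum.inl '' (∅ : Set (semT w1).Ev) ∪ Sum.inr '' T0ᶜ := by
          rw [hSdec, sum_compl_decomp, Set.compl_univ]
        refine ⟨Term.seq w1 a, b, ?_, TNormal.seq h1 hna hn1 hane, hnb,
          (by intro h; cases h), hbne, ?_, ?_, ?_⟩
        · exact BimEq.trans (BimEq.seq_congr (BimEq.refl w1) heq) (BimEq.seq_assoc w1 a b)
        · simp only [tsize] at hsz ⊢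
          omega
        · exact isoETrans (restrictCongrSetE _ hSdec)
            (isoETrans (restrictSumSeqE _ _ _ _) (congrSeqE (restrictUnivE _) hiso1))
        · exact isoETrans (restrictCongrSetE _ hScdec)
            (isoETrans (restrictSumSeqE _ _ _ _)
              (isoETrans (congrSeqE (restrictEmptyE _) hiso2) (isoESeqUnitL _)))
      · have hSub : ∀ z ∈ S, ∃ x, z = Sum.inl x := by
          rintro (a | b) hz
          · exact ⟨a, rfl⟩
          · exact absurd ⟨b, hz⟩ hcase
        set S0 : Set (semT w1).Ev := Sum.inl ⁻¹' S with hS0def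
        have hS1 : Sum.inr ⁻¹' S = (∅ : Set (semT w2).Ev) := by
          ext y
          simp only [Set.mem_preimage, Set.mem_empty_iff_false, iff_false]
          intro hy
          exact hcase ⟨y, hy⟩
        have hSdec : S = Sum.inl '' S0 ∪ Sum.inr '' (∅ : Set (semT w2).Ev) := by
          have := sum_set_decomp S
          rw [hS1] at this
          exact this
        by_cases hS0u : S0 = Set.univ
        · have hSdec' : S = Sum.inl '' Set.univ ∪ Sum.inr '' (∅ : Set (semT w2).Ev) := by
            rw [hSdec, hS0u]
          have hScdec : Sᶜ = Sum.inl '' (∅ : Set (semT w1).Ev) ∪ Sum.inr '' Set.univ := by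
            rw [hSdec', sum_compl_decomp, Set.compl_univ, Set.compl_empty]
          refine ⟨w1, w2, BimEq.refl _, h1, h2, hn1, hn2, (by simp [tsize]), ?_, ?_⟩
          · exact isoETrans (restrictCongrSetE _ hSdec')
              (isoETrans (restrictSumSeqE _ _ _ _)
                (isoETrans (congrSeqE (restrictUnivE _) (restrictEmptyE _)) (isoESeqUnitR _)))
          · exact isoETrans (restrictCongrSetE _ hScdec)
              (isoETrans (restrictSumSeqE _ _ _ _)
                (isoETrans (congrSeqE (restrictEmptyE _) (restrictUnivE _)) (isoESeqUnitL _)))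
        · have hS0ne : S0.Nonempty := by
            obtain ⟨z, hz⟩ := hSne
            obtain ⟨x, rfl⟩ := hSub z hz
            exact ⟨x, hz⟩
          have hS0cne : S0ᶜ.Nonempty := Set.nonempty_compl.2 hS0u
          have hpre' : IsPrefix (semT w1) S0 := fun e he f hf => hpre _ he _ hf
          have hnest' : Nested (semT w1) S0 := by
            intro B hB
            rcases hnest (Sum.inl '' B) (mem_seq_boxes.2 (Or.inl ⟨B, hB, rfl⟩)) with h | h
            · left; intro b hb; exact h ⟨b, hb, rfl⟩
            · right
              ext b
              simp only [Set.mem_inter_iff, Set.mem_empty_iff_false, iff_false]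
              rintro ⟨hb1, hb2⟩
              have : Sum.inl b ∈ (Sum.inl '' B) ∩ S := ⟨⟨b, hb1, rfl⟩, hb2⟩
              rw [h] at this
              exact this
          obtain ⟨a, b, heq, hna, hnb, hane, hbne, hsz, hiso1, hiso2⟩ :=
            ih1 h1 S0 hS0ne hS0cne hpre' hnest'
          have hScdec : Sᶜ = Sum.inl '' S0ᶜ ∪ Sum.inr '' Set.univ := by
            rw [hSdec, sum_compl_decomp, Set.compl_empty]
          refine ⟨a, Term.seq b w2, ?_, hna, TNormal.seq hnb h2 hbne hn2,
            hane, (by intro h; cases h), ?_, ?_, ?_⟩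
          · exact BimEq.trans (BimEq.seq_congr heq (BimEq.refl w2))
              (BimEq.symm (BimEq.seq_assoc a b w2))
          · simp only [tsize] at hsz ⊢
            omega
          · exact isoETrans (restrictCongrSetE _ hSdec)
              (isoETrans (restrictSumSeqE _ _ _ _)
                (isoETrans (congrSeqE hiso1 (restrictEmptyE _)) (isoESeqUnitR _)))
          · exact isoETrans (restrictCongrSetE _ hScdec)
              (isoETrans (restrictSumSeqE _ _ _ _) (congrSeqE hiso2 (restrictUnivE _)))


/-- A set of events closed under order-relatedness and shared boxes. -/
def Sat (P : PB A) (C : Set P.Ev) : Prop :=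
  ∀ e ∈ C, ∀ f, (P.le e f ∨ P.le f e ∨ ∃ B ∈ P.boxes, e ∈ B ∧ f ∈ B) → f ∈ C

theorem parSwap (a b c : Term A) :
    BimEq (Term.par (.par a b) c) (Term.par (.par a c) b) :=
  BimEq.trans (BimEq.symm (BimEq.par_assoc a b c))
    (BimEq.trans (BimEq.par_congr (BimEq.refl a) (BimEq.par_comm b c))
      (BimEq.par_assoc a c b))

theorem parRot (x a b : Term A) :
    BimEq (Term.par x (.par a b)) (Term.par a (.par x b)) :=
  BimEq.trans (BimEq.par_assoc x a b)
    (BimEq.trans (BimEq.par_congr (BimEq.par_comm x a) (BimEq.refl b))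
      (BimEq.symm (BimEq.par_assoc a x b)))

theorem parSplit (w : Term A) (hN : TNormal w) :
    ∀ C : Set (semT w).Ev, C.Nonempty → Cᶜ.Nonempty → Sat (semT w) C →
    ∃ w1 w2 : Term A, BimEq w (.par w1 w2) ∧ TNormal w1 ∧ TNormal w2 ∧
      w1 ≠ .one ∧ w2 ≠ .one ∧ tsize w1 + tsize w2 < tsize w ∧
      IsoE (restrictPB (semT w) C) (semT w1) ∧
      IsoE (restrictPB (semT w) Cᶜ) (semT w2) := by
  induction w with
  | one =>
    intro C hCne _ _
    obtain ⟨x, _⟩ := hCne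
    exact x.elim
  | atom a =>
    intro C hCne hCcne _
    obtain ⟨x, hx⟩ := hCne
    obtain ⟨y, hy⟩ := hCcne
    cases x; cases y
    exact absurd hx hy
  | box w' ih =>
    intro C hCne hCcne hsat
    cases hN with
    | box h' hn' hnb' =>
      exfalso
      obtain ⟨x, hx⟩ := hCne
      obtain ⟨y, hy⟩ := hCcne
      exact hy (hsat _ hx _ (Or.inr (Or.inr
        ⟨Set.univ, univ_box_of_box h' hn', trivial, trivial⟩)))
  | seq w1 w2 ih1 ih2 =>
    intro C hCne hCcne hsat
    cases hN with
    | seq h1 h2 hn1 hn2 =>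
      exfalso
      obtain ⟨x, hx⟩ := hCne
      have hAll : ∀ z, z ∈ C := by
        rcases x with a | a
        · obtain ⟨q0⟩ := normal_nonempty h2 hn2
          have hq : Sum.inr q0 ∈ C := hsat _ hx _ (Or.inl trivial)
          rintro (b | b)
          · exact hsat _ hq _ (Or.inr (Or.inl trivial))
          · exact hsat _ hx _ (Or.inl trivial)
        · obtain ⟨p0⟩ := normal_nonempty h1 hn1
          have hp : Sum.inl p0 ∈ C := hsat _ hx _ (Or.inr (Or.inl trivial))
          rintro (b | b)
          · exact hsat _ hx _ (Or.inr (Or.inl trivial))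
          · exact hsat _ hp _ (Or.inl trivial)
      obtain ⟨y, hy⟩ := hCcne
      exact hy (hAll y)
  | par w1 w2 ih1 ih2 =>
    intro C hCne hCcne hsat
    cases hN with
    | par h1 h2 hn1 hn2 =>
      set C0 : Set (semT w1).Ev := Sum.inl ⁻¹' C with hC0def
      set C1 : Set (semT w2).Ev := Sum.inr ⁻¹' C with hC1def
      have hCdec : C = Sum.inl '' C0 ∪ Sum.inr '' C1 := sum_set_decomp C
      have hCcdec : Cᶜ = Sum.inl '' C0ᶜ ∪ Sum.inr '' C1ᶜ := by
        have := sum_set_decomp Cᶜ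
        rw [show Sum.inl ⁻¹' Cᶜ = C0ᶜ from rfl, show Sum.inr ⁻¹' Cᶜ = C1ᶜ from rfl] at this
        exact this
      have hsat0 : Sat (semT w1) C0 := by
        intro e he f hf
        refine hsat (Sum.inl e) he (Sum.inl f) ?_
        rcases hf with h | h | ⟨B, hB, heB, hfB⟩
        · exact Or.inl h
        · exact Or.inr (Or.inl h)
        · exact Or.inr (Or.inr ⟨Sum.inl '' B, mem_par_boxes.2 (Or.inl ⟨B, hB, rfl⟩),
            ⟨e, heB, rfl⟩, ⟨f, hfB, rfl⟩⟩)
      have hsat1 : Sat (semT w2) C1 := by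
        intro e he f hf
        refine hsat (Sum.inr e) he (Sum.inr f) ?_
        rcases hf with h | h | ⟨B, hB, heB, hfB⟩
        · exact Or.inl h
        · exact Or.inr (Or.inl h)
        · exact Or.inr (Or.inr ⟨Sum.inr '' B, mem_par_boxes.2 (Or.inr ⟨B, hB, rfl⟩),
            ⟨e, heB, rfl⟩, ⟨f, hfB, rfl⟩⟩)
      by_cases h1e : C1 = ∅
      · have hC0ne : C0.Nonempty := by
          obtain ⟨z, hz⟩ := hCne
          rcases z with a | b
          · exact ⟨a, hz⟩
          · have : b ∈ C1 := hz
            rw [h1e] at this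
            exact this.elim
        by_cases h0u : C0 = Set.univ
        · have hCdec' : C = Sum.inl '' Set.univ ∪ Sum.inr '' (∅ : Set (semT w2).Ev) := by
            rw [hCdec, h0u, h1e]
          have hCcdec' : Cᶜ = Sum.inl '' (∅ : Set (semT w1).Ev) ∪ Sum.inr '' Set.univ := by
            rw [hCcdec, h0u, h1e, Set.compl_univ, Set.compl_empty]
          refine ⟨w1, w2, BimEq.refl _, h1, h2, hn1, hn2, (by simp [tsize]), ?_, ?_⟩
          · exact isoETrans (restrictCongrSetE _ hCdec')
              (isoETrans (restrictSumParE _ _ _ _)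
                (isoETrans (congrParE (restrictUnivE _) (restrictEmptyE _)) (isoEParUnitR _)))
          · exact isoETrans (restrictCongrSetE _ hCcdec')
              (isoETrans (restrictSumParE _ _ _ _)
                (isoETrans (congrParE (restrictEmptyE _) (restrictUnivE _)) (isoEParUnitL _)))
        · have hC0cne : C0ᶜ.Nonempty := Set.nonempty_compl.2 h0u
          obtain ⟨a, b, heq, hna, hnb, hane, hbne, hsz, hiso1, hiso2⟩ :=
            ih1 h1 C0 hC0ne hC0cne hsat0
          have hCdec' : C = Sum.inl '' C0 ∪ Sum.inr '' (∅ : Set (semT w2).Ev) := by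
            rw [hCdec, h1e]
          have hCcdec' : Cᶜ = Sum.inl '' C0ᶜ ∪ Sum.inr '' Set.univ := by
            rw [hCcdec, h1e, Set.compl_empty]
          refine ⟨a, Term.par b w2, ?_, hna, TNormal.par hnb h2 hbne hn2,
            hane, (by intro h; cases h), ?_, ?_, ?_⟩
          · exact BimEq.trans (BimEq.par_congr heq (BimEq.refl w2))
              (BimEq.symm (BimEq.par_assoc a b w2))
          · simp only [tsize] at hsz ⊢
            omega
          · exact isoETrans (restrictCongrSetE _ hCdec')
              (isoETrans (restrictSumParE _ _ _ _)
                (isoETrans (congrParE hiso1 (restrictEmptyE _)) (isoEParUnitR _)))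
          · exact isoETrans (restrictCongrSetE _ hCcdec')
              (isoETrans (restrictSumParE _ _ _ _) (congrParE hiso2 (restrictUnivE _)))
      · have hC1ne : C1.Nonempty := Set.nonempty_iff_ne_empty.2 h1e
        by_cases h1u : C1 = Set.univ
        · by_cases h0e : C0 = ∅
          · have hCdec' : C = Sum.inl '' (∅ : Set (semT w1).Ev) ∪ Sum.inr '' Set.univ := by
              rw [hCdec, h0e, h1u]
            have hCcdec' : Cᶜ = Sum.inl '' Set.univ ∪ Sum.inr '' (∅ : Set (semT w2).Ev) := by
              rw [hCcdec, h0e, h1u, Set.compl_univ, Set.compl_empty]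
            refine ⟨w2, w1, BimEq.par_comm w1 w2, h2, h1, hn2, hn1, (by simp [tsize]; omega), ?_, ?_⟩
            · exact isoETrans (restrictCongrSetE _ hCdec')
                (isoETrans (restrictSumParE _ _ _ _)
                  (isoETrans (congrParE (restrictEmptyE _) (restrictUnivE _)) (isoEParUnitL _)))
            · exact isoETrans (restrictCongrSetE _ hCcdec')
                (isoETrans (restrictSumParE _ _ _ _)
                  (isoETrans (congrParE (restrictUnivE _) (restrictEmptyE _)) (isoEParUnitR _)))
          · by_cases h0u : C0 = Set.univ
            · exfalso
              obtain ⟨y, hy⟩ := hCcne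
              refine hy ?_
              rw [hCdec, h0u, h1u]
              rcases y with a | b
              · exact Or.inl ⟨a, trivial, rfl⟩
              · exact Or.inr ⟨b, trivial, rfl⟩
            · have hC0ne : C0.Nonempty := Set.nonempty_iff_ne_empty.2 h0e
              have hC0cne : C0ᶜ.Nonempty := Set.nonempty_compl.2 h0u
              obtain ⟨a, b, heq, hna, hnb, hane, hbne, hsz, hiso1, hiso2⟩ :=
                ih1 h1 C0 hC0ne hC0cne hsat0
              have hCdec' : C = Sum.inl '' C0 ∪ Sum.inr '' Set.univ := by
                rw [hCdec, h1u]
              have hCcdec' : Cᶜ = Sum.inl '' C0ᶜ ∪ Sum.inr '' (∅ : Set (semT w2).Ev) := by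
                rw [hCcdec, h1u, Set.compl_univ]
              refine ⟨Term.par a w2, b, ?_, TNormal.par hna h2 hane hn2, hnb,
                (by intro h; cases h), hbne, ?_, ?_, ?_⟩
              · exact BimEq.trans (BimEq.par_congr heq (BimEq.refl w2)) (parSwap a b w2)
              · simp only [tsize] at hsz ⊢
                omega
              · exact isoETrans (restrictCongrSetE _ hCdec')
                  (isoETrans (restrictSumParE _ _ _ _) (congrParE hiso1 (restrictUnivE _)))
              · exact isoETrans (restrictCongrSetE _ hCcdec')
                  (isoETrans (restrictSumParE _ _ _ _)
                    (isoETrans (congrParE hiso2 (restrictEmptyE _)) (isoEParUnitR _)))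
        · have hC1cne : C1ᶜ.Nonempty := Set.nonempty_compl.2 h1u
          obtain ⟨c, d, heq2, hnc, hnd, hcne', hdne', hsz2, hiso1b, hiso2b⟩ :=
            ih2 h2 C1 hC1ne hC1cne hsat1
          by_cases h0e : C0 = ∅
          · have hCdec' : C = Sum.inl '' (∅ : Set (semT w1).Ev) ∪ Sum.inr '' C1 := by
              rw [hCdec, h0e]
            have hCcdec' : Cᶜ = Sum.inl '' Set.univ ∪ Sum.inr '' C1ᶜ := by
              rw [hCcdec, h0e, Set.compl_empty]
            refine ⟨c, Term.par w1 d, ?_, hnc, TNormal.par h1 hnd hn1 hdne',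
              hcne', (by intro h; cases h), ?_, ?_, ?_⟩
            · exact BimEq.trans (BimEq.par_congr (BimEq.refl w1) heq2) (parRot w1 c d)
            · simp only [tsize] at hsz2 ⊢
              omega
            · exact isoETrans (restrictCongrSetE _ hCdec')
                (isoETrans (restrictSumParE _ _ _ _)
                  (isoETrans (congrParE (restrictEmptyE _) hiso1b) (isoEParUnitL _)))
            · exact isoETrans (restrictCongrSetE _ hCcdec')
                (isoETrans (restrictSumParE _ _ _ _) (congrParE (restrictUnivE _) hiso2b))
          · by_cases h0u : C0 = Set.univ
            · have hCdec' : C = Sum.inl '' Set.univ ∪ Sum.inr '' C1 := by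
                rw [hCdec, h0u]
              have hCcdec' : Cᶜ = Sum.inl '' (∅ : Set (semT w1).Ev) ∪ Sum.inr '' C1ᶜ := by
                rw [hCcdec, h0u, Set.compl_univ]
              refine ⟨Term.par w1 c, d, ?_, TNormal.par h1 hnc hn1 hcne', hnd,
                (by intro h; cases h), hdne', ?_, ?_, ?_⟩
              · exact BimEq.trans (BimEq.par_congr (BimEq.refl w1) heq2)
                  (BimEq.par_assoc w1 c d)
              · simp only [tsize] at hsz2 ⊢
                omega
              · exact isoETrans (restrictCongrSetE _ hCdec')
                  (isoETrans (restrictSumParE _ _ _ _) (congrParE (restrictUnivE _) hiso1b))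
              · exact isoETrans (restrictCongrSetE _ hCcdec')
                  (isoETrans (restrictSumParE _ _ _ _)
                    (isoETrans (congrParE (restrictEmptyE _) hiso2b) (isoEParUnitL _)))
            · have hC0ne : C0.Nonempty := Set.nonempty_iff_ne_empty.2 h0e
              have hC0cne : C0ᶜ.Nonempty := Set.nonempty_compl.2 h0u
              obtain ⟨a, b, heq1, hna, hnb, hane, hbne, hsz1, hiso1a, hiso2a⟩ :=
                ih1 h1 C0 hC0ne hC0cne hsat0
              refine ⟨Term.par a c, Term.par b d, ?_, TNormal.par hna hnc hane hcne',
                TNormal.par hnb hnd hbne hdne',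
                (by intro h; cases h), (by intro h; cases h), ?_, ?_, ?_⟩
              · exact BimEq.trans (BimEq.par_congr heq1 heq2) (parMedial a b c d)
              · simp only [tsize] at hsz1 hsz2 ⊢
                omega
              · exact isoETrans (restrictCongrSetE _ hCdec)
                  (isoETrans (restrictSumParE _ _ _ _) (congrParE hiso1a hiso1b))
              · exact isoETrans (restrictCongrSetE _ hCcdec)
                  (isoETrans (restrictSumParE _ _ _ _) (congrParE hiso2a hiso2b))


theorem mainComp (n : Nat) : ∀ s t : Term A, tsize s + tsize t ≤ n →
    TNormal s → TNormal t → IsoE (semT s) (semT t) → BimEq s t := by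
  induction n using Nat.strong_induction_on with
  | _ n IH =>
  intro s t hsz hNs hNt hiso
  cases s with
  | one =>
    obtain ⟨e, _, _, _⟩ := hiso
    by_cases ht : t = Term.one
    · subst ht; exact BimEq.refl _
    · obtain ⟨y⟩ := normal_nonempty hNt ht
      exact (e.symm y).elim
  | atom a =>
    obtain ⟨e, hlab, hle, hbox⟩ := hiso
    cases t with
    | one => exact (e PUnit.unit).elim
    | atom b =>
      have hba : b = a := hlab PUnit.unit
      cases hba
      exact BimEq.refl _
    | seq t1 t2 =>
      exfalso
      cases hNt with
      | seq ht1 ht2 htn1 htn2 =>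
        obtain ⟨x⟩ := normal_nonempty ht1 htn1
        obtain ⟨y⟩ := normal_nonempty ht2 htn2
        have : (Sum.inl x : (semT (Term.seq t1 t2)).Ev) = Sum.inr y := by
          have h1 : e (e.symm (Sum.inl x)) = Sum.inl x := e.apply_symm_apply _
          have h2 : e (e.symm (Sum.inr y)) = Sum.inr y := e.apply_symm_apply _
          rw [← h1, ← h2]
          congr 1
        cases this
    | par t1 t2 =>
      exfalso
      cases hNt with
      | par ht1 ht2 htn1 htn2 =>
        obtain ⟨x⟩ := normal_nonempty ht1 htn1
        obtain ⟨y⟩ := normal_nonempty ht2 htn2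
        have : (Sum.inl x : (semT (Term.par t1 t2)).Ev) = Sum.inr y := by
          have h1 : e (e.symm (Sum.inl x)) = Sum.inl x := e.apply_symm_apply _
          have h2 : e (e.symm (Sum.inr y)) = Sum.inr y := e.apply_symm_apply _
          rw [← h1, ← h2]
          congr 1
        cases this
    | box t' =>
      exfalso
      cases hNt with
      | box ht' htn' htnb' =>
        have hu : Set.univ ∈ (semT (Term.box t')).boxes := univ_box_of_box ht' htn'
        have := (hbox (e.symm '' Set.univ)).2 (by rw [Equiv.image_symm_image]; exact hu)
        exact absurd this (Set.notMem_empty _)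
  | box s' =>
    cases hNs with
    | box hs' hsn' hsnb' =>
      obtain ⟨e, hlab, hle, hbox⟩ := hiso
      have hu : Set.univ ∈ (semT t).boxes := by
        have h1 := (hbox Set.univ).1 (univ_box_of_box hs' hsn')
        rwa [show e '' Set.univ = Set.univ from by rw [Set.image_univ, Equiv.range_eq_univ]] at h1
      obtain ⟨t', rfl⟩ := box_shape hNt hu
      cases hNt with
      | box ht' htn' htnb' =>
        have hiso' : IsoE (semT s') (semT t') := by
          refine ⟨e, hlab, hle, ?_⟩
          intro B
          constructor
          · intro hB
            rcases (hbox B).1 (Or.inl hB) with h | ⟨huniv, _⟩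
            · exact h
            · exfalso
              have hBu : B = Set.univ := by
                have h2 := congrArg (fun X => e.symm '' X) huniv
                simpa [Equiv.symm_image_image, Set.image_univ, Equiv.range_eq_univ] using h2
              rw [hBu] at hB
              exact noUnivBox hs' hsnb' hB
          · intro hB
            rcases (hbox B).2 (Or.inl hB) with h | ⟨huniv, _⟩
            · exact h
            · exfalso
              have h2 : Set.univ ∈ (semT t').boxes := by
                convert hB using 2
                simp [huniv, Set.image_univ, Equiv.range_eq_univ]
              exact noUnivBox ht' htnb' h2
        have hlt : tsize s' + tsize t' < n := by
          simp only [tsize] at hsz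
          omega
        exact BimEq.box_congr (IH _ hlt s' t' le_rfl hs' ht' hiso')
  | seq s1 s2 =>
    cases hNs with
    | seq hs1 hs2 hn1 hn2 =>
      obtain ⟨e, hlab, hle, hbox⟩ := hiso
      set L : Set (semT (Term.seq s1 s2)).Ev := Set.range Sum.inl with hLdef
      set S : Set (semT t).Ev := e '' L with hSdef
      have hLpre : IsPrefix (semT (Term.seq s1 s2)) L := by
        rintro x ⟨a, rfl⟩ f hf
        rcases f with b | b
        · exact absurd ⟨b, rfl⟩ hf
        · trivial
      have hSne : S.Nonempty := by
        obtain ⟨x⟩ := normal_nonempty hs1 hn1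
        exact ⟨e (Sum.inl x), ⟨Sum.inl x, ⟨x, rfl⟩, rfl⟩⟩
      have hScompl : Sᶜ = e '' Lᶜ := (Set.image_compl_eq e.bijective).symm
      have hScne : Sᶜ.Nonempty := by
        rw [hScompl]
        obtain ⟨y⟩ := normal_nonempty hs2 hn2
        exact ⟨e (Sum.inr y), ⟨Sum.inr y, (by rintro ⟨c, hc⟩; cases hc), rfl⟩⟩
      have hmemS : ∀ z : (semT (Term.seq s1 s2)).Ev, e z ∈ S ↔ z ∈ L := by
        intro z
        constructor
        · rintro ⟨z', hz', hzz⟩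
          rwa [← e.injective hzz]
        · intro hz; exact ⟨z, hz, rfl⟩
      have hSpre : IsPrefix (semT t) S := by
        rintro x hx f hf
        obtain ⟨z, hz, rfl⟩ := hx
        have hf' : e.symm f ∉ L := by
          intro hmem
          exact hf ⟨e.symm f, hmem, e.apply_symm_apply f⟩
        have h2 := (hle z (e.symm f)).1 (hLpre z hz (e.symm f) hf')
        rwa [e.apply_symm_apply] at h2
      have hSnest : Nested (semT t) S := by
        intro B' hB'
        have hBmem : e.symm '' B' ∈ (semT (Term.seq s1 s2)).boxes :=
          (hbox (e.symm '' B')).2 (by rwa [Equiv.image_symm_image])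
        have hBsided : (e.symm '' B') ⊆ L ∨ (e.symm '' B') ∩ L = ∅ := by
          rcases mem_seq_boxes.1 hBmem with ⟨C, _, hCe⟩ | ⟨C, _, hCe⟩
          · left; rw [hCe]; rintro x ⟨c, hc, rfl⟩; exact ⟨c, rfl⟩
          · right
            rw [hCe]
            ext x
            simp only [Set.mem_inter_iff, Set.mem_empty_iff_false, iff_false]
            rintro ⟨⟨c, hc, rfl⟩, ⟨d, hd⟩⟩
            cases hd
        have hB'eq : B' = e '' (e.symm '' B') := (Equiv.image_symm_image e B').symm
        rcases hBsided with h | h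
        · left
          rw [hB'eq]
          rintro x ⟨z, hz, rfl⟩
          exact ⟨z, h hz, rfl⟩
        · right
          rw [hB'eq]
          ext x
          simp only [Set.mem_inter_iff, Set.mem_empty_iff_false, iff_false]
          rintro ⟨⟨z, hz, rfl⟩, hxS⟩
          have hzL : z ∈ L := (hmemS z).1 hxS
          have hmem2 : z ∈ (e.symm '' B') ∩ L := ⟨hz, hzL⟩
          rw [h] at hmem2
          exact hmem2
      obtain ⟨t1, t2, heqt, hnt1, hnt2, ht1ne, ht2ne, hszt, hisoT1, hisoT2⟩ :=
        seqSplit t hNt S hSne hScne hSpre hSnest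
      have hisoS1 : IsoE (semT s1) (semT t1) :=
        isoETrans (isoESymm (restrictRangeInlSeqE (semT s1) (semT s2)))
          (isoETrans (restrictIsoE e hlab hle hbox L)
            (isoETrans (restrictCongrSetE _ hSdef.symm) hisoT1))
      have hisoS2 : IsoE (semT s2) (semT t2) :=
        isoETrans (isoESymm (restrictRangeInlComplSeqE (semT s1) (semT s2)))
          (isoETrans (restrictIsoE e hlab hle hbox Lᶜ)
            (isoETrans (restrictCongrSetE _ hScompl.symm) hisoT2))
      have h1 : BimEq s1 t1 := by
        refine IH (tsize s1 + tsize t1) ?_ s1 t1 le_rfl hs1 hnt1 hisoS1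
        simp only [tsize] at hsz
        omega
      have h2 : BimEq s2 t2 := by
        refine IH (tsize s2 + tsize t2) ?_ s2 t2 le_rfl hs2 hnt2 hisoS2
        simp only [tsize] at hsz
        omega
      exact BimEq.trans (BimEq.seq_congr h1 h2) (BimEq.symm heqt)
  | par s1 s2 =>
    cases hNs with
    | par hs1 hs2 hn1 hn2 =>
      obtain ⟨e, hlab, hle, hbox⟩ := hiso
      set L : Set (semT (Term.par s1 s2)).Ev := Set.range Sum.inl with hLdef
      set S : Set (semT t).Ev := e '' L with hSdef
      have hSne : S.Nonempty := by
        obtain ⟨x⟩ := normal_nonempty hs1 hn1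
        exact ⟨e (Sum.inl x), ⟨Sum.inl x, ⟨x, rfl⟩, rfl⟩⟩
      have hScompl : Sᶜ = e '' Lᶜ := (Set.image_compl_eq e.bijective).symm
      have hScne : Sᶜ.Nonempty := by
        rw [hScompl]
        obtain ⟨y⟩ := normal_nonempty hs2 hn2
        exact ⟨e (Sum.inr y), ⟨Sum.inr y, (by rintro ⟨c, hc⟩; cases hc), rfl⟩⟩
      have hLsat : Sat (semT (Term.par s1 s2)) L := by
        rintro x ⟨a, rfl⟩ f hf
        rcases f with b | b
        · exact ⟨b, rfl⟩
        · exfalso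
          rcases hf with h | h | ⟨B, hB, hxB, hfB⟩
          · exact h
          · exact h
          · rcases mem_par_boxes.1 hB with ⟨C, _, rfl⟩ | ⟨C, _, rfl⟩
            · obtain ⟨c, _, hcd⟩ := hfB; cases hcd
            · obtain ⟨c, _, hcd⟩ := hxB; cases hcd
      have hCsat : Sat (semT t) S := by
        intro x hx f hf
        obtain ⟨z, hz, rfl⟩ := hx
        have hstep : (semT (Term.par s1 s2)).le z (e.symm f) ∨
            (semT (Term.par s1 s2)).le (e.symm f) z ∨
            ∃ B ∈ (semT (Term.par s1 s2)).boxes, z ∈ B ∧ e.symm f ∈ B := by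
          rcases hf with h | h | ⟨B', hB', hxB', hfB'⟩
          · left
            exact (hle z (e.symm f)).2 (by rwa [e.apply_symm_apply])
          · right; left
            exact (hle (e.symm f) z).2 (by rwa [e.apply_symm_apply])
          · right; right
            refine ⟨e.symm '' B', (hbox _).2 (by rwa [Equiv.image_symm_image]), ?_, ?_⟩
            · exact ⟨e z, hxB', e.symm_apply_apply _⟩
            · exact ⟨f, hfB', rfl⟩
        have hfL := hLsat z hz (e.symm f) hstep
        rw [← e.apply_symm_apply f]
        exact ⟨e.symm f, hfL, rfl⟩
      obtain ⟨t1, t2, heqt, hnt1, hnt2, ht1ne, ht2ne, hszt, hisoT1, hisoT2⟩ :=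
        parSplit t hNt S hSne hScne hCsat
      have hisoS1 : IsoE (semT s1) (semT t1) :=
        isoETrans (isoESymm (restrictRangeInlParE (semT s1) (semT s2)))
          (isoETrans (restrictIsoE e hlab hle hbox L)
            (isoETrans (restrictCongrSetE _ hSdef.symm) hisoT1))
      have hisoS2 : IsoE (semT s2) (semT t2) :=
        isoETrans (isoESymm (restrictRangeInlComplParE (semT s1) (semT s2)))
          (isoETrans (restrictIsoE e hlab hle hbox Lᶜ)
            (isoETrans (restrictCongrSetE _ hScompl.symm) hisoT2))
      have h1 : BimEq s1 t1 := by
        refine IH (tsize s1 + tsize t1) ?_ s1 t1 le_rfl hs1 hnt1 hisoS1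
        simp only [tsize] at hsz
        omega
      have h2 : BimEq s2 t2 := by
        refine IH (tsize s2 + tsize t2) ?_ s2 t2 le_rfl hs2 hnt2 hisoS2
        simp only [tsize] at hsz
        omega
      exact BimEq.trans (BimEq.par_congr h1 h2) (BimEq.symm heqt)

end Aux

/-- Soundness and completeness of the bimonoid-with-boxes axioms for isomorphism. -/
theorem bimonoid_completeness (A : Type) (s t : Term A) :
    Iso (semT s) (semT t) ↔ BimEq s t := by
  constructor
  · intro hiso
    obtain ⟨ns, hns, hes⟩ := tnormalize s
    obtain ⟨nt, hnt, het⟩ := tnormalize t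
    have h1 : IsoE (semT ns) (semT nt) :=
      isoETrans (isoESymm (soundnessE hes))
        (isoETrans ((iso_iff_isoE _ _).1 hiso) (soundnessE het))
    have h2 := mainComp (tsize ns + tsize nt) ns nt le_rfl hns hnt h1
    exact BimEq.trans hes (BimEq.trans h2 (BimEq.symm het))
  · intro h
    exact (iso_iff_isoE _ _).2 (soundnessE h)
end

section
/- For every term e in the syntax with 0 and choice (e ::= 0 | 1 | a | e·f | e∥f | e+f | [e]), there is a finite set T_e of series–parallel terms (without 0 or +) such that e equals the finite join of T_e provably in the bisemiring-with-boxes theory, and the set-of-posets interpretation of e equals (up to isomorphism) { ⟦s⟧ : s ∈ T_e }. -/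
/-- Terms with failure `0` and non-deterministic choice `+`. -/
inductive Term2 (A : Type) : Type
  | zero : Term2 A
  | one : Term2 A
  | atom (a : A) : Term2 A
  | seq (e f : Term2 A) : Term2 A
  | par (e f : Term2 A) : Term2 A
  | plus (e f : Term2 A) : Term2 A
  | box (e : Term2 A) : Term2 A

/-- Embedding of series–parallel terms into the extended syntax. -/
def Term.toTerm2 {A : Type} : Term A → Term2 A
  | .one => .one
  | .atom a => .atom a
  | .seq s t => .seq s.toTerm2 t.toTerm2
  | .par s t => .par s.toTerm2 t.toTerm2
  | .box s => .box s.toTerm2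

/-- Interpretation of extended terms as sets of posets with boxes. -/
def semT2 {A : Type} : Term2 A → Set (PB A)
  | .zero => ∅
  | .one => {onePB A}
  | .atom a => {atomPB a}
  | .seq e f => Set.image2 seqPB (semT2 e) (semT2 f)
  | .par e f => Set.image2 parPB (semT2 e) (semT2 f)
  | .plus e f => semT2 e ∪ semT2 f
  | .box e => boxPB '' semT2 e

/-- Derivability in the equational theory of bisemirings with boxes. -/
inductive BSEq {A : Type} : Term2 A → Term2 A → Prop
  | seq_assoc (s t u : Term2 A) : BSEq (.seq s (.seq t u)) (.seq (.seq s t) u)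
  | par_assoc (s t u : Term2 A) : BSEq (.par s (.par t u)) (.par (.par s t) u)
  | par_comm (s t : Term2 A) : BSEq (.par s t) (.par t s)
  | seq_unit_l (s : Term2 A) : BSEq (.seq .one s) s
  | seq_unit_r (s : Term2 A) : BSEq (.seq s .one) s
  | par_unit (s : Term2 A) : BSEq (.par .one s) s
  | box_box (s : Term2 A) : BSEq (.box (.box s)) (.box s)
  | box_one : BSEq (.box .one) .one
  | plus_assoc (e f g : Term2 A) : BSEq (.plus e (.plus f g)) (.plus (.plus e f) g)
  | plus_comm (e f : Term2 A) : BSEq (.plus e f) (.plus f e)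
  | plus_idem (e : Term2 A) : BSEq (.plus e e) e
  | plus_unit (e : Term2 A) : BSEq (.plus .zero e) e
  | seq_zero_l (e : Term2 A) : BSEq (.seq .zero e) .zero
  | seq_zero_r (e : Term2 A) : BSEq (.seq e .zero) .zero
  | par_zero (e : Term2 A) : BSEq (.par .zero e) .zero
  | seq_distr_l (e f g : Term2 A) :
      BSEq (.seq e (.plus f g)) (.plus (.seq e f) (.seq e g))
  | seq_distr_r (e f g : Term2 A) :
      BSEq (.seq (.plus e f) g) (.plus (.seq e g) (.seq f g))
  | par_distr (e f g : Term2 A) :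
      BSEq (.par e (.plus f g)) (.plus (.par e f) (.par e g))
  | box_zero : BSEq (A := A) (.box .zero) .zero
  | box_plus (e f : Term2 A) : BSEq (.box (.plus e f)) (.plus (.box e) (.box f))
  | refl (e : Term2 A) : BSEq e e
  | symm {e f : Term2 A} : BSEq e f → BSEq f e
  | trans {e f g : Term2 A} : BSEq e f → BSEq f g → BSEq e g
  | seq_congr {e e' f f' : Term2 A} : BSEq e e' → BSEq f f' → BSEq (.seq e f) (.seq e' f')
  | par_congr {e e' f f' : Term2 A} : BSEq e e' → BSEq f f' → BSEq (.par e f) (.par e' f')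
  | plus_congr {e e' f f' : Term2 A} : BSEq e e' → BSEq f f' → BSEq (.plus e f) (.plus e' f')
  | box_congr {e e' : Term2 A} : BSEq e e' → BSEq (.box e) (.box e')

section Aux

variable {A : Type}

/-- Strong isomorphism of posets with boxes, via an equivalence. -/
structure IsoE_s16 (P Q : PB A) where
  e : P.Ev ≃ Q.Ev
  lab_eq : ∀ x, Q.lab (e x) = P.lab x
  le_iff : ∀ x y, Q.le (e x) (e y) ↔ P.le x y
  box_iff : ∀ B : Set P.Ev, (e '' B) ∈ Q.boxes ↔ B ∈ P.boxes

theorem IsoE_s16.box_pres {P Q : PB A} (i : IsoE_s16 P Q) (B : Set P.Ev)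
    (hB : B ∈ P.boxes) : i.e '' B ∈ Q.boxes := (i.box_iff B).mpr hB

def IsoE_s16.mk' {P Q : PB A} (e : P.Ev ≃ Q.Ev)
    (lab_eq : ∀ x, Q.lab (e x) = P.lab x)
    (le_iff : ∀ x y, Q.le (e x) (e y) ↔ P.le x y)
    (bp : ∀ B ∈ P.boxes, e '' B ∈ Q.boxes)
    (bp' : ∀ B ∈ Q.boxes, e.symm '' B ∈ P.boxes) : IsoE_s16 P Q :=
  ⟨e, lab_eq, le_iff, fun B =>
    ⟨fun h => by have := bp' _ h; rwa [Equiv.symm_image_image] at this, bp B⟩⟩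

def IsoE_s16.refl (P : PB A) : IsoE_s16 P P :=
  ⟨Equiv.refl _, fun _ => rfl, fun _ _ => Iff.rfl, fun B => by simp⟩

def IsoE_s16.symm {P Q : PB A} (i : IsoE_s16 P Q) : IsoE_s16 Q P where
  e := i.e.symm
  lab_eq := fun x => by
    conv_rhs => rw [← Equiv.apply_symm_apply i.e x]
    rw [i.lab_eq]
  le_iff := fun x y => by
    rw [← i.le_iff, Equiv.apply_symm_apply, Equiv.apply_symm_apply]
  box_iff := fun B => by
    rw [← i.box_iff (i.e.symm '' B), Equiv.image_symm_image]

theorem IsoE_s16.iso {P Q : PB A} (i : IsoE_s16 P Q) : Iso P Q :=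
  ⟨⟨i.e, i.e.bijective, i.lab_eq, fun x y h => (i.le_iff x y).mpr h,
    fun B hB => i.box_pres B hB⟩,
   fun x y h => (i.le_iff x y).mp h, fun B h => (i.box_iff B).mp h⟩

theorem iso_isoE {P Q : PB A} (h : Iso P Q) : Nonempty (IsoE_s16 P Q) := by
  obtain ⟨φ, hord, hbox⟩ := h
  exact ⟨⟨Equiv.ofBijective φ.toFun φ.bij, φ.lab_eq,
    fun x y => ⟨hord x y, φ.mono x y⟩, fun B => ⟨hbox B, φ.box_pres B⟩⟩⟩

def IsoE_s16.seqCongr {P P' Q Q' : PB A} (i : IsoE_s16 P P') (j : IsoE_s16 Q Q') :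
    IsoE_s16 (seqPB P Q) (seqPB P' Q') :=
  IsoE_s16.mk' (i.e.sumCongr j.e)
    (fun x => by cases x; exacts [i.lab_eq _, j.lab_eq _])
    (fun x y => by
      cases x <;> cases y <;> [exact i.le_iff _ _; exact Iff.rfl; exact Iff.rfl; exact j.le_iff _ _])
    (by
      rintro B (⟨C, hC, rfl⟩ | ⟨C, hC, rfl⟩)
      · exact Or.inl ⟨i.e '' C, i.box_pres C hC, by
          rw [Set.image_image]; exact (Set.image_image (g := ⇑(i.e.sumCongr j.e)) (f := Sum.inl) (s := C)).symm⟩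
      · exact Or.inr ⟨j.e '' C, j.box_pres C hC, by
          rw [Set.image_image]; exact (Set.image_image (g := ⇑(i.e.sumCongr j.e)) (f := Sum.inr) (s := C)).symm⟩)
    (by
      rintro B (⟨C, hC, rfl⟩ | ⟨C, hC, rfl⟩)
      · exact Or.inl ⟨i.e.symm '' C, i.symm.box_pres C hC, by
          rw [Set.image_image]; exact (Set.image_image (g := ⇑((i.e.sumCongr j.e).symm)) (f := Sum.inl) (s := C)).symm⟩
      · exact Or.inr ⟨j.e.symm '' C, j.symm.box_pres C hC, by
          rw [Set.image_image]; exact (Set.image_image (g := ⇑((i.e.sumCongr j.e).symm)) (f := Sum.inr) (s := C)).symm⟩)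

def IsoE_s16.parCongr {P P' Q Q' : PB A} (i : IsoE_s16 P P') (j : IsoE_s16 Q Q') :
    IsoE_s16 (parPB P Q) (parPB P' Q') :=
  IsoE_s16.mk' (i.e.sumCongr j.e)
    (fun x => by cases x; exacts [i.lab_eq _, j.lab_eq _])
    (fun x y => by
      cases x <;> cases y <;> [exact i.le_iff _ _; exact Iff.rfl; exact Iff.rfl; exact j.le_iff _ _])
    (by
      rintro B (⟨C, hC, rfl⟩ | ⟨C, hC, rfl⟩)
      · exact Or.inl ⟨i.e '' C, i.box_pres C hC, by
          rw [Set.image_image]; exact (Set.image_image (g := ⇑(i.e.sumCongr j.e)) (f := Sum.inl) (s := C)).symm⟩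
      · exact Or.inr ⟨j.e '' C, j.box_pres C hC, by
          rw [Set.image_image]; exact (Set.image_image (g := ⇑(i.e.sumCongr j.e)) (f := Sum.inr) (s := C)).symm⟩)
    (by
      rintro B (⟨C, hC, rfl⟩ | ⟨C, hC, rfl⟩)
      · exact Or.inl ⟨i.e.symm '' C, i.symm.box_pres C hC, by
          rw [Set.image_image]; exact (Set.image_image (g := ⇑((i.e.sumCongr j.e).symm)) (f := Sum.inl) (s := C)).symm⟩
      · exact Or.inr ⟨j.e.symm '' C, j.symm.box_pres C hC, by
          rw [Set.image_image]; exact (Set.image_image (g := ⇑((i.e.sumCongr j.e).symm)) (f := Sum.inr) (s := C)).symm⟩)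

def IsoE_s16.boxCongr {P Q : PB A} (i : IsoE_s16 P Q) : IsoE_s16 (boxPB P) (boxPB Q) :=
  IsoE_s16.mk' i.e i.lab_eq i.le_iff
    (by
      rintro B (hB | ⟨rfl, hne⟩)
      · exact Or.inl (i.box_pres B hB)
      · exact Or.inr ⟨Set.image_univ_of_surjective i.e.surjective, hne.image _⟩)
    (by
      rintro B (hB | ⟨rfl, hne⟩)
      · exact Or.inl (i.symm.box_pres B hB)
      · exact Or.inr ⟨Set.image_univ_of_surjective i.e.symm.surjective, hne.image _⟩)

/-- Finite join of series–parallel terms. -/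
def join (L : List (Term A)) : Term2 A :=
  L.foldr (fun s acc => Term2.plus s.toTerm2 acc) Term2.zero

theorem BSEq.plus_unit_r (e : Term2 A) : BSEq (.plus e .zero) e :=
  (BSEq.plus_comm e .zero).trans (BSEq.plus_unit e)

theorem join_append (L M : List (Term A)) :
    BSEq (join (L ++ M)) (.plus (join L) (join M)) := by
  induction L with
  | nil => exact (BSEq.plus_unit (join M)).symm
  | cons s L ih =>
      refine BSEq.trans ?_ (BSEq.plus_assoc _ _ _)
      exact BSEq.plus_congr (BSEq.refl _) ih

theorem seq_join_single (s : Term A) (M : List (Term A)) :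
    BSEq (.seq s.toTerm2 (join M)) (join (M.map (fun t => Term.seq s t))) := by
  induction M with
  | nil => exact BSEq.seq_zero_r _
  | cons t M ih =>
      refine BSEq.trans (BSEq.seq_distr_l _ _ _) ?_
      exact BSEq.plus_congr (BSEq.refl _) ih

theorem seq_join (L M : List (Term A)) :
    BSEq (.seq (join L) (join M))
      (join (L.flatMap fun s => M.map (fun t => Term.seq s t))) := by
  induction L with
  | nil => exact BSEq.seq_zero_l _
  | cons s L ih =>
      refine BSEq.trans (BSEq.seq_distr_r _ _ _) ?_
      refine BSEq.trans (BSEq.plus_congr (seq_join_single s M) ih) ?_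
      exact (join_append _ _).symm

theorem BSEq.par_zero_r (e : Term2 A) : BSEq (.par e .zero) .zero :=
  (BSEq.par_comm e .zero).trans (BSEq.par_zero e)

theorem BSEq.par_distr_r (e f g : Term2 A) :
    BSEq (.par (.plus e f) g) (.plus (.par e g) (.par f g)) :=
  ((BSEq.par_comm _ _).trans (BSEq.par_distr g e f)).trans
    (BSEq.plus_congr (BSEq.par_comm _ _) (BSEq.par_comm _ _))

theorem par_join_single (s : Term A) (M : List (Term A)) :
    BSEq (.par s.toTerm2 (join M)) (join (M.map (fun t => Term.par s t))) := by
  induction M with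
  | nil => exact BSEq.par_zero_r _
  | cons t M ih =>
      refine BSEq.trans (BSEq.par_distr _ _ _) ?_
      exact BSEq.plus_congr (BSEq.refl _) ih

theorem par_join (L M : List (Term A)) :
    BSEq (.par (join L) (join M))
      (join (L.flatMap fun s => M.map (fun t => Term.par s t))) := by
  induction L with
  | nil => exact BSEq.par_zero _
  | cons s L ih =>
      refine BSEq.trans (BSEq.par_distr_r _ _ _) ?_
      refine BSEq.trans (BSEq.plus_congr (par_join_single s M) ih) ?_
      exact (join_append _ _).symm

theorem box_join (L : List (Term A)) :
    BSEq (.box (join L)) (join (L.map Term.box)) := by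
  induction L with
  | nil => exact BSEq.box_zero
  | cons s L ih =>
      refine BSEq.trans (BSEq.box_plus _ _) ?_
      exact BSEq.plus_congr (BSEq.refl _) ih

end Aux
/-- Every extended term is provably a finite join of series–parallel terms, with
matching set-of-posets semantics up to isomorphism. -/
theorem expr_to_terms (A : Type) (e : Term2 A) :
    ∃ L : List (Term A),
      BSEq e (L.foldr (fun s acc => Term2.plus s.toTerm2 acc) Term2.zero) ∧
      (∀ P ∈ semT2 e, ∃ s ∈ L, Iso P (semT s)) ∧
      (∀ s ∈ L, ∃ P ∈ semT2 e, Iso P (semT s)) := by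
  induction e with
  | zero =>
      exact ⟨[], BSEq.refl _, fun P hP => absurd hP (Set.notMem_empty _),
        fun s hs => absurd hs List.not_mem_nil⟩
  | one =>
      refine ⟨[.one], (BSEq.plus_unit_r _).symm, ?_, ?_⟩
      · rintro P rfl
        exact ⟨.one, List.mem_singleton.mpr rfl, (IsoE_s16.refl _).iso⟩
      · rintro s hs
        rw [List.mem_singleton] at hs
        subst hs
        exact ⟨onePB A, rfl, (IsoE_s16.refl _).iso⟩
  | atom a =>
      refine ⟨[.atom a], (BSEq.plus_unit_r _).symm, ?_, ?_⟩
      · rintro P rfl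
        exact ⟨.atom a, List.mem_singleton.mpr rfl, (IsoE_s16.refl _).iso⟩
      · rintro s hs
        rw [List.mem_singleton] at hs
        subst hs
        exact ⟨atomPB a, rfl, (IsoE_s16.refl _).iso⟩
  | seq e f ihe ihf =>
      obtain ⟨Le, he, he1, he2⟩ := ihe
      obtain ⟨Lf, hf, hf1, hf2⟩ := ihf
      refine ⟨Le.flatMap fun s => Lf.map (fun t => Term.seq s t),
        (BSEq.seq_congr he hf).trans (seq_join Le Lf), ?_, ?_⟩
      · rintro P ⟨P1, hP1, P2, hP2, rfl⟩
        obtain ⟨s, hs, hiso1⟩ := he1 P1 hP1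
        obtain ⟨t, ht, hiso2⟩ := hf1 P2 hP2
        obtain ⟨i1⟩ := iso_isoE hiso1
        obtain ⟨i2⟩ := iso_isoE hiso2
        refine ⟨Term.seq s t, ?_, (i1.seqCongr i2).iso⟩
        exact List.mem_flatMap.mpr ⟨s, hs, List.mem_map.mpr ⟨t, ht, rfl⟩⟩
      · rintro u hu
        obtain ⟨s, hs, hu⟩ := List.mem_flatMap.mp hu
        obtain ⟨t, ht, rfl⟩ := List.mem_map.mp hu
        obtain ⟨P1, hP1, hiso1⟩ := he2 s hs
        obtain ⟨P2, hP2, hiso2⟩ := hf2 t ht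
        obtain ⟨i1⟩ := iso_isoE hiso1
        obtain ⟨i2⟩ := iso_isoE hiso2
        exact ⟨seqPB P1 P2, ⟨P1, hP1, P2, hP2, rfl⟩, (i1.seqCongr i2).iso⟩
  | par e f ihe ihf =>
      obtain ⟨Le, he, he1, he2⟩ := ihe
      obtain ⟨Lf, hf, hf1, hf2⟩ := ihf
      refine ⟨Le.flatMap fun s => Lf.map (fun t => Term.par s t),
        (BSEq.par_congr he hf).trans (par_join Le Lf), ?_, ?_⟩
      · rintro P ⟨P1, hP1, P2, hP2, rfl⟩
        obtain ⟨s, hs, hiso1⟩ := he1 P1 hP1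
        obtain ⟨t, ht, hiso2⟩ := hf1 P2 hP2
        obtain ⟨i1⟩ := iso_isoE hiso1
        obtain ⟨i2⟩ := iso_isoE hiso2
        refine ⟨Term.par s t, ?_, (i1.parCongr i2).iso⟩
        exact List.mem_flatMap.mpr ⟨s, hs, List.mem_map.mpr ⟨t, ht, rfl⟩⟩
      · rintro u hu
        obtain ⟨s, hs, hu⟩ := List.mem_flatMap.mp hu
        obtain ⟨t, ht, rfl⟩ := List.mem_map.mp hu
        obtain ⟨P1, hP1, hiso1⟩ := he2 s hs
        obtain ⟨P2, hP2, hiso2⟩ := hf2 t ht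
        obtain ⟨i1⟩ := iso_isoE hiso1
        obtain ⟨i2⟩ := iso_isoE hiso2
        exact ⟨parPB P1 P2, ⟨P1, hP1, P2, hP2, rfl⟩, (i1.parCongr i2).iso⟩
  | plus e f ihe ihf =>
      obtain ⟨Le, he, he1, he2⟩ := ihe
      obtain ⟨Lf, hf, hf1, hf2⟩ := ihf
      refine ⟨Le ++ Lf, (BSEq.plus_congr he hf).trans (join_append Le Lf).symm,
        ?_, ?_⟩
      · rintro P (hP | hP)
        · obtain ⟨s, hs, hiso⟩ := he1 P hP
          exact ⟨s, List.mem_append.mpr (Or.inl hs), hiso⟩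
        · obtain ⟨s, hs, hiso⟩ := hf1 P hP
          exact ⟨s, List.mem_append.mpr (Or.inr hs), hiso⟩
      · rintro s hs
        rcases List.mem_append.mp hs with hs | hs
        · obtain ⟨P, hP, hiso⟩ := he2 s hs
          exact ⟨P, Or.inl hP, hiso⟩
        · obtain ⟨P, hP, hiso⟩ := hf2 s hs
          exact ⟨P, Or.inr hP, hiso⟩
  | box e ihe =>
      obtain ⟨Le, he, he1, he2⟩ := ihe
      refine ⟨Le.map Term.box, (BSEq.box_congr he).trans (box_join Le), ?_, ?_⟩
      · rintro P ⟨P1, hP1, rfl⟩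
        obtain ⟨s, hs, hiso⟩ := he1 P1 hP1
        obtain ⟨i⟩ := iso_isoE hiso
        exact ⟨Term.box s, List.mem_map.mpr ⟨s, hs, rfl⟩, i.boxCongr.iso⟩
      · rintro u hu
        obtain ⟨s, hs, rfl⟩ := List.mem_map.mp hu
        obtain ⟨P, hP, hiso⟩ := he2 s hs
        obtain ⟨i⟩ := iso_isoE hiso
        exact ⟨boxPB P, ⟨P, hP, rfl⟩, i.boxCongr.iso⟩
end
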